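/- arXiv:2105.09056 — 2 statements merged into one kernel-verified Lean document; each statement's English description precedes it below -/
import Mathlib

section
/- Let D be a Hermitian Dirac operator with zero diagonal on n vertices and let i, j be two vertices connected in G_D. Let P(i,j) ⊆ {1,…,n} be the set of vertices lying on some path from i to j in G_D (a path being a walk with no repeated edge), and let D' be the principal submatrix of D indexed by P(i,j). Then d^D(i,j) = d^{D'}(i,j), where the right-hand side is the noncommutative distance computed in the submatrix D'. -/
open scoped ENNReal

/-- The operator norm on square matrices induced by the Euclidean (ℓ²) norm. -/
noncomputable def opNorm {ι : Type*} [Finite ι] (M : Matrix ι ι ℂ) : ℝ :=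
  letI := Fintype.ofFinite ι
  letI := Classical.decEq ι
  ‖Matrix.toEuclideanCLM (𝕜 := ℂ) M‖

/-- The commutator `[D, π(a)]` of a matrix with the diagonal matrix of `a`. -/
noncomputable def commD {ι : Type*} [Finite ι] (D : Matrix ι ι ℂ) (a : ι → ℂ) : Matrix ι ι ℂ :=
  letI := Fintype.ofFinite ι
  letI := Classical.decEq ι
  D * Matrix.diagonal a - Matrix.diagonal a * D

/-- Connes' noncommutative distance associated to the Dirac operator `D`. -/
noncomputable def ncDist {ι : Type*} [Finite ι] (D : Matrix ι ι ℂ) (i j : ι) : ℝ≥0∞ :=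
  ⨆ (a : ι → ℂ) (_ : opNorm (commD D a) ≤ 1), ENNReal.ofReal ‖a i - a j‖

/-- The weight of an edge: the inverse of `|D i j|` (infinite if `D i j = 0`). -/
noncomputable def eWeight {ι : Type*} (D : Matrix ι ι ℂ) (u v : ι) : ℝ≥0∞ :=
  (ENNReal.ofReal ‖D u v‖)⁻¹

/-- Adjacency in the graph `G_D`. -/
def Adjac {ι : Type*} (D : Matrix ι ι ℂ) (u v : ι) : Prop := u ≠ v ∧ D u v ≠ 0

/-- The length of a walk `i :: p` computed with weights `eWeight D`. -/
noncomputable def walkLength {ι : Type*} (D : Matrix ι ι ℂ) : ι → List ι → ℝ≥0∞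
  | _, [] => 0
  | u, v :: rest => eWeight D u v + walkLength D v rest

/-- `i :: p` is a walk from `i` to `j` in the graph `G_D`. -/
def IsWalk {ι : Type*} (D : Matrix ι ι ℂ) (i j : ι) (p : List ι) : Prop :=
  List.Chain (Adjac D) i p ∧ (i :: p).getLast (List.cons_ne_nil _ _) = j

/-- `i` and `j` lie in the same connected component of `G_D`. -/
def Conn {ι : Type*} (D : Matrix ι ι ℂ) (i j : ι) : Prop := ∃ p, IsWalk D i j p

/-- The geodesic (weighted shortest-path) distance on `G_D`. -/
noncomputable def gDist {ι : Type*} (D : Matrix ι ι ℂ) (i j : ι) : ℝ≥0∞ :=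
  ⨅ (p : List ι) (_ : IsWalk D i j p), walkLength D i p


/-- The list of edges (as unordered pairs) of the walk `i :: p`. -/
def walkEdges {ι : Type*} : ι → List ι → List (Sym2 ι)
  | _, [] => []
  | u, v :: rest => s(u, v) :: walkEdges v rest

/-- A path (trail): a walk with no repeated edge. -/
def IsTrail {ι : Type*} (D : Matrix ι ι ℂ) (i j : ι) (p : List ι) : Prop :=
  IsWalk D i j p ∧ (walkEdges i p).Nodup

/-- `P(i,j)`: the set of vertices lying on some path (trail) from `i` to `j`. -/
def pathSet {ι : Type*} (D : Matrix ι ι ℂ) (i j : ι) : Set ι :=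
  {v | ∃ p, IsTrail D i j p ∧ v ∈ i :: p}

open Matrix

section NormLemmas

set_option linter.unusedSectionVars false

variable {ι κ : Type*} [Fintype ι] [DecidableEq ι] [Fintype κ] [DecidableEq κ]

lemma euclid_norm_eq (y : ι → ℂ) :
    ‖(WithLp.equiv 2 (ι → ℂ)).symm y‖ = Real.sqrt (∑ v, ‖y v‖ ^ 2) := by
  rw [EuclideanSpace.norm_eq]
  congr 1

lemma toEuclideanCLM_equiv_symm_aux (M : Matrix ι ι ℂ) (x : ι → ℂ) :
    Matrix.toEuclideanCLM (𝕜 := ℂ) M ((WithLp.equiv 2 (ι → ℂ)).symm x) =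
      (WithLp.equiv 2 (ι → ℂ)).symm (M *ᵥ x) := rfl

lemma clm_mulVec_le (M : Matrix ι ι ℂ) (x : ι → ℂ) :
    ‖(WithLp.equiv 2 (ι → ℂ)).symm (M *ᵥ x)‖ ≤
      ‖Matrix.toEuclideanCLM (𝕜 := ℂ) M‖ * ‖(WithLp.equiv 2 (ι → ℂ)).symm x‖ := by
  have := (Matrix.toEuclideanCLM (𝕜 := ℂ) M).le_opNorm ((WithLp.equiv 2 (ι → ℂ)).symm x)
  rwa [toEuclideanCLM_equiv_symm_aux] at this

lemma sum_image_eq {β : Type*} [AddCommMonoid β] (e : κ → ι) (he : Function.Injective e)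
    (g : ι → β) (hg : ∀ u, (¬ ∃ k, e k = u) → g u = 0) :
    ∑ u, g u = ∑ k, g (e k) := by
  have h1 := Finset.sum_image (s := (Finset.univ : Finset κ)) (g := e) (f := g)
    (fun a _ b _ h => he h)
  rw [← h1]
  symm
  apply Finset.sum_subset (Finset.subset_univ _)
  intro u _ hu
  apply hg
  rintro ⟨k, rfl⟩
  exact hu (Finset.mem_image.mpr ⟨k, Finset.mem_univ _, rfl⟩)

lemma sum_image_le (e : κ → ι) (he : Function.Injective e) (g : ι → ℝ)
    (hg : ∀ u, 0 ≤ g u) :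
    ∑ k, g (e k) ≤ ∑ u, g u := by
  have h1 := Finset.sum_image (s := (Finset.univ : Finset κ)) (g := e) (f := g)
    (fun a _ b _ h => he h)
  rw [← h1]
  apply Finset.sum_le_sum_of_subset_of_nonneg (Finset.subset_univ _)
  intro u _ _
  exact hg u

/-- L1 : the norm of a (principal) submatrix is at most the norm of the matrix. -/
lemma norm_submatrix_le (M : Matrix ι ι ℂ) (e : κ → ι) (he : Function.Injective e) :
    ‖Matrix.toEuclideanCLM (𝕜 := ℂ) (M.submatrix e e)‖ ≤ ‖Matrix.toEuclideanCLM (𝕜 := ℂ) M‖ := by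
  apply ContinuousLinearMap.opNorm_le_bound _ (norm_nonneg _)
  intro v
  set x : κ → ℂ := WithLp.equiv 2 (κ → ℂ) v with hx
  have hv : v = (WithLp.equiv 2 (κ → ℂ)).symm x := rfl
  set x' : ι → ℂ := fun u => if h : ∃ k, e k = u then x h.choose else 0 with hx'
  have hx'e : ∀ k, x' (e k) = x k := by
    intro k
    have h : ∃ k', e k' = e k := ⟨k, rfl⟩
    simp only [hx', dif_pos h]
    congr 1
    exact he h.choose_spec
  have hx'0 : ∀ u, (¬ ∃ k, e k = u) → x' u = 0 := by
    intro u hu; simp only [hx', dif_neg hu]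
  have hnormx : ‖v‖ = ‖(WithLp.equiv 2 (ι → ℂ)).symm x'‖ := by
    rw [hv, euclid_norm_eq, euclid_norm_eq]
    congr 1
    rw [sum_image_eq e he (fun u => ‖x' u‖ ^ 2) (by intro u hu; simp [hx'0 u hu])]
    exact Finset.sum_congr rfl fun k _ => by rw [hx'e]
  have hmv : ∀ k, (M.submatrix e e *ᵥ x) k = (M *ᵥ x') (e k) := by
    intro k
    simp only [Matrix.mulVec, Matrix.submatrix_apply, dotProduct]
    rw [sum_image_eq e he (fun u => M (e k) u * x' u)
      (by intro u hu; simp [hx'0 u hu])]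
    exact Finset.sum_congr rfl fun l _ => by rw [hx'e]
  have h1 : ‖Matrix.toEuclideanCLM (𝕜 := ℂ) (M.submatrix e e) v‖
      ≤ ‖(WithLp.equiv 2 (ι → ℂ)).symm (M *ᵥ x')‖ := by
    rw [hv, toEuclideanCLM_equiv_symm_aux, euclid_norm_eq,
      euclid_norm_eq]
    apply Real.sqrt_le_sqrt
    calc ∑ k, ‖(M.submatrix e e *ᵥ x) k‖ ^ 2
        = ∑ k, ‖(M *ᵥ x') (e k)‖ ^ 2 := Finset.sum_congr rfl fun k _ => by rw [hmv]
      _ ≤ ∑ u, ‖(M *ᵥ x') u‖ ^ 2 :=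
          sum_image_le e he (fun u => ‖(M *ᵥ x') u‖ ^ 2) (fun u => by positivity)
  calc ‖Matrix.toEuclideanCLM (𝕜 := ℂ) (M.submatrix e e) v‖
      ≤ ‖(WithLp.equiv 2 (ι → ℂ)).symm (M *ᵥ x')‖ := h1
    _ ≤ ‖Matrix.toEuclideanCLM (𝕜 := ℂ) M‖ * ‖(WithLp.equiv 2 (ι → ℂ)).symm x'‖ :=
        clm_mulVec_le M x'
    _ = ‖Matrix.toEuclideanCLM (𝕜 := ℂ) M‖ * ‖v‖ := by rw [hnormx]

/-- L2 : if `M` is supported on the range of `e`, the norm of `M` is at most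
the norm of the corresponding submatrix. -/
lemma norm_le_norm_submatrix (M : Matrix ι ι ℂ) (e : κ → ι) (he : Function.Injective e)
    (hsupp : ∀ u v, M u v ≠ 0 → (∃ k, e k = u) ∧ (∃ k, e k = v)) :
    ‖Matrix.toEuclideanCLM (𝕜 := ℂ) M‖ ≤ ‖Matrix.toEuclideanCLM (𝕜 := ℂ) (M.submatrix e e)‖ := by
  apply ContinuousLinearMap.opNorm_le_bound _ (norm_nonneg _)
  intro v
  set y : ι → ℂ := WithLp.equiv 2 (ι → ℂ) v with hy
  have hv : v = (WithLp.equiv 2 (ι → ℂ)).symm y := rfl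
  set x : κ → ℂ := fun k => y (e k) with hxdef
  have hmv : ∀ k, (M *ᵥ y) (e k) = (M.submatrix e e *ᵥ x) k := by
    intro k
    simp only [Matrix.mulVec, Matrix.submatrix_apply, dotProduct, hxdef]
    rw [sum_image_eq e he (fun u => M (e k) u * y u)]
    intro u hu
    rcases eq_or_ne (M (e k) u) 0 with h | h
    · rw [h, zero_mul]
    · exact absurd ((hsupp _ _ h).2) hu
  have hmv0 : ∀ u, (¬ ∃ k, e k = u) → (M *ᵥ y) u = 0 := by
    intro u hu
    simp only [Matrix.mulVec, dotProduct]
    apply Finset.sum_eq_zero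
    intro w _
    rcases eq_or_ne (M u w) 0 with h | h
    · rw [h, zero_mul]
    · exact absurd ((hsupp _ _ h).1) hu
  have h1 : ‖Matrix.toEuclideanCLM (𝕜 := ℂ) M v‖
      = ‖(WithLp.equiv 2 (κ → ℂ)).symm (M.submatrix e e *ᵥ x)‖ := by
    rw [hv, toEuclideanCLM_equiv_symm_aux, euclid_norm_eq,
      euclid_norm_eq]
    congr 1
    rw [sum_image_eq e he (fun u => ‖(M *ᵥ y) u‖ ^ 2)
      (by intro u hu; simp [hmv0 u hu])]
    exact Finset.sum_congr rfl fun k _ => by rw [hmv]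
  have h2 : ‖(WithLp.equiv 2 (κ → ℂ)).symm x‖ ≤ ‖v‖ := by
    rw [hv, euclid_norm_eq, euclid_norm_eq]
    apply Real.sqrt_le_sqrt
    exact sum_image_le e he (fun u => ‖y u‖ ^ 2) (fun u => by positivity)
  rw [h1]
  calc ‖(WithLp.equiv 2 (κ → ℂ)).symm (M.submatrix e e *ᵥ x)‖
      ≤ ‖Matrix.toEuclideanCLM (𝕜 := ℂ) (M.submatrix e e)‖ * ‖(WithLp.equiv 2 (κ → ℂ)).symm x‖ :=
        clm_mulVec_le _ x
    _ ≤ ‖Matrix.toEuclideanCLM (𝕜 := ℂ) (M.submatrix e e)‖ * ‖v‖ :=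
        mul_le_mul_of_nonneg_left h2 (norm_nonneg _)

end NormLemmas

namespace NCG

variable {ι : Type*}

/-- The final vertex of the walk `u :: l`. -/
def lastV (u : ι) (l : List ι) : ι := l.getLastD u

@[simp] lemma lastV_nil (u : ι) : lastV u ([] : List ι) = u := rfl
@[simp] lemma lastV_cons (u v : ι) (l : List ι) : lastV u (v :: l) = lastV v l := by
  cases l <;> simp [lastV, List.getLastD]

lemma lastV_eq_getLast (u : ι) (l : List ι) (h : u :: l ≠ []) :
    (u :: l).getLast h = lastV u l := by
  induction l generalizing u with
  | nil => simp [lastV]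
  | cons v t ih => rw [List.getLast_cons (by simp)]; rw [ih v]; simp

lemma lastV_append (u : ι) (l₁ l₂ : List ι) :
    lastV u (l₁ ++ l₂) = lastV (lastV u l₁) l₂ := by
  induction l₁ generalizing u with
  | nil => simp
  | cons v t ih => simp [ih]

lemma lastV_mem (u : ι) (l : List ι) : lastV u l ∈ u :: l := by
  induction l generalizing u with
  | nil => simp
  | cons v t ih => simpa using (List.mem_cons).2 (Or.inr (ih v))

lemma chain_append_iff (R : ι → ι → Prop) (u : ι) (l₁ l₂ : List ι) :
    List.Chain R u (l₁ ++ l₂) ↔ List.Chain R u l₁ ∧ List.Chain R (lastV u l₁) l₂ := by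
  induction l₁ generalizing u with
  | nil => simp [List.Chain]
  | cons v t ih => simp only [List.Chain] at ih ⊢; simp [ih, and_assoc]

lemma walkEdges_append (u : ι) (l₁ l₂ : List ι) :
    walkEdges u (l₁ ++ l₂) = walkEdges u l₁ ++ walkEdges (lastV u l₁) l₂ := by
  induction l₁ generalizing u with
  | nil => simp [walkEdges]
  | cons v t ih => simp [walkEdges, ih]

lemma mem_of_mem_walkEdges {u x : ι} {l : List ι} {e : Sym2 ι}
    (he : e ∈ walkEdges u l) (hx : x ∈ e) : x ∈ u :: l := by
  induction l generalizing u with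
  | nil => simp [walkEdges] at he
  | cons v t ih =>
    simp only [walkEdges, List.mem_cons] at he
    rcases he with rfl | he
    · rcases Sym2.mem_iff.1 hx with rfl | rfl
      · exact List.mem_cons_self
      · exact List.mem_cons_of_mem _ (List.mem_cons_self)
    · exact List.mem_cons_of_mem _ (ih he)

/-- `Step l a b`: the walk `l` contains the (ordered) step `a → b`. -/
def Step (l : List ι) (a b : ι) : Prop := ∃ l₁ l₂, l = l₁ ++ a :: b :: l₂

lemma step_cons_iff {x a b : ι} {l : List ι} :
    Step (x :: l) a b ↔ (a = x ∧ ∃ l₂, l = b :: l₂) ∨ Step l a b := by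
  constructor
  · rintro ⟨l₁, l₂, h⟩
    cases l₁ with
    | nil =>
      simp only [List.nil_append, List.cons.injEq] at h
      exact Or.inl ⟨h.1.symm, l₂, h.2⟩
    | cons c t => simp at h; exact Or.inr ⟨t, l₂, h.2⟩
  · rintro (⟨rfl, l₂, rfl⟩ | ⟨l₁, l₂, rfl⟩)
    · exact ⟨[], l₂, rfl⟩
    · exact ⟨x :: l₁, l₂, rfl⟩

lemma step_pair_iff {x y a b : ι} : Step [x, y] a b ↔ a = x ∧ b = y := by
  constructor
  · rintro ⟨l₁, l₂, h⟩
    cases l₁ with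
    | nil => simp at h; exact ⟨h.1.symm, h.2.1.symm⟩
    | cons c t =>
      simp at h
      rcases h with ⟨-, h2⟩
      cases t with
      | nil => simp at h2
      | cons d t2 => simp at h2
  · rintro ⟨rfl, rfl⟩; exact ⟨[], [], rfl⟩

lemma step_of_chain {R : ι → ι → Prop} {u a b : ι} {l : List ι}
    (hc : List.Chain R u l) (hs : Step (u :: l) a b) : R a b := by
  induction l generalizing u with
  | nil => rcases hs with ⟨l₁, l₂, h⟩; cases l₁ <;> simp_all
  | cons v t ih =>
    rcases step_cons_iff.1 hs with ⟨rfl, l₂, h⟩ | hs'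
    · cases hc with
      | cons_cons hr _ => rw [List.cons.injEq] at h; exact h.1 ▸ hr
    · exact ih (List.chain_cons.1 hc).2 hs'

lemma mem_walkEdges_iff {u : ι} {l : List ι} {e : Sym2 ι} :
    e ∈ walkEdges u l ↔ ∃ a b, Step (u :: l) a b ∧ e = s(a, b) := by
  induction l generalizing u with
  | nil =>
    simp only [walkEdges, List.not_mem_nil, false_iff]
    rintro ⟨a, b, ⟨l₁, l₂, h⟩, -⟩
    cases l₁ <;> simp at h
  | cons v t ih =>
    simp only [walkEdges, List.mem_cons]
    constructor
    · rintro (rfl | he)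
      · exact ⟨u, v, ⟨[], t, rfl⟩, rfl⟩
      · rcases ih.1 he with ⟨a, b, hs, rfl⟩
        exact ⟨a, b, step_cons_iff.2 (Or.inr hs), rfl⟩
    · rintro ⟨a, b, hs, rfl⟩
      rcases step_cons_iff.1 hs with ⟨rfl, l₂, h⟩ | hs'
      · rw [List.cons.injEq] at h; rw [h.1]; exact Or.inl rfl
      · exact Or.inr (ih.2 ⟨a, b, hs', rfl⟩)

lemma step_append_left {a b : ι} {l l₀ : List ι} (h : Step l a b) : Step (l₀ ++ l) a b := by
  rcases h with ⟨l₁, l₂, rfl⟩; exact ⟨l₀ ++ l₁, l₂, by simp⟩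

lemma step_append_right {a b : ι} {l l₀ : List ι} (h : Step l a b) : Step (l ++ l₀) a b := by
  rcases h with ⟨l₁, l₂, rfl⟩; exact ⟨l₁, l₂ ++ l₀, by simp⟩


section Flow

variable [DecidableEq ι]

/-- One directed step's contribution to a flow. -/
def stepFlow (u v x y : ι) : ℤ :=
  (if x = u ∧ y = v then 1 else 0) - (if x = v ∧ y = u then 1 else 0)

/-- The (unit) flow along the walk `u :: l`. -/
def chi : ι → List ι → ι → ι → ℤ
  | _, [], _, _ => 0
  | u, v :: rest, x, y => stepFlow u v x y + chi v rest x y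

@[simp] lemma chi_nil (u x y : ι) : chi u ([] : List ι) x y = 0 := rfl
lemma chi_cons (u v : ι) (rest : List ι) (x y : ι) :
    chi u (v :: rest) x y = stepFlow u v x y + chi v rest x y := rfl

lemma stepFlow_skew (u v x y : ι) : stepFlow u v x y = - stepFlow u v y x := by
  simp only [stepFlow, and_comm]
  ring

lemma chi_skew (u : ι) (l : List ι) (x y : ι) : chi u l x y = - chi u l y x := by
  induction l generalizing u with
  | nil => simp
  | cons v rest ih => rw [chi_cons, chi_cons, stepFlow_skew, ih v]; ring

lemma chi_ne_zero_mem {u x y : ι} {l : List ι} (h : chi u l x y ≠ 0) :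
    s(x, y) ∈ walkEdges u l := by
  induction l generalizing u with
  | nil => simp at h
  | cons v rest ih =>
    rw [chi_cons] at h
    rcases eq_or_ne (chi v rest x y) 0 with h0 | h0
    · rw [h0, add_zero] at h
      simp only [stepFlow] at h
      by_cases h1 : x = u ∧ y = v
      · rw [h1.1, h1.2]; simp [walkEdges, Sym2.eq_swap]
      · by_cases h2 : x = v ∧ y = u
        · rw [h2.1, h2.2]; simp [walkEdges, Sym2.eq_swap]
        · simp [h1, h2] at h
    · exact List.mem_cons_of_mem _ (ih h0)

lemma stepFlow_eq_zero_of_ne {u v x y : ι} (h : s(x, y) ≠ s(u, v)) : stepFlow u v x y = 0 := by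
  simp only [stepFlow]
  have h1 : ¬(x = u ∧ y = v) := by rintro ⟨rfl, rfl⟩; exact h rfl
  have h2 : ¬(x = v ∧ y = u) := by rintro ⟨rfl, rfl⟩; exact h (Sym2.eq_swap)
  simp [h1, h2]

lemma chi_step_eq_one {u a b : ι} {l : List ι} (hnd : (walkEdges u l).Nodup)
    (hne : List.Chain Ne u l) (hs : Step (u :: l) a b) : chi u l a b = 1 := by
  induction l generalizing u with
  | nil => rcases hs with ⟨l₁, l₂, h⟩; cases l₁ <;> simp_all
  | cons v rest ih =>
    rw [chi_cons]
    rcases step_cons_iff.1 hs with ⟨rfl, l₂, h⟩ | hs'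
    · rw [List.cons.injEq] at h
      obtain ⟨hvb, hrest⟩ := h
      subst hvb
      have hvu : a ≠ v := (List.chain_cons.1 hne).1
      have h0 : chi v rest a v = 0 := by
        by_contra h0
        have := chi_ne_zero_mem h0
        simp only [walkEdges, List.nodup_cons] at hnd
        exact hnd.1 this
      rw [h0, add_zero]
      simp [stepFlow, hvu, hvu.symm]
    · have h0 : stepFlow u v a b = 0 := by
        apply stepFlow_eq_zero_of_ne
        intro h
        have : s(a, b) ∈ walkEdges v rest := mem_walkEdges_iff.2 ⟨a, b, hs', rfl⟩
        simp only [walkEdges, List.nodup_cons] at hnd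
        rw [h] at this
        exact hnd.1 this
      rw [h0, zero_add]
      exact ih (by simp only [walkEdges, List.nodup_cons] at hnd; exact hnd.2)
        (List.chain_cons.1 hne).2 hs'

lemma chi_eq_one_step {u a b : ι} {l : List ι} (hnd : (walkEdges u l).Nodup)
    (h : chi u l a b = 1) : Step (u :: l) a b := by
  induction l generalizing u with
  | nil => simp at h
  | cons v rest ih =>
    rw [chi_cons] at h
    by_cases he : s(a, b) = s(u, v)
    · have h0 : chi v rest a b = 0 := by
        by_contra h0
        have := chi_ne_zero_mem h0
        simp only [walkEdges, List.nodup_cons] at hnd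
        rw [he] at this
        exact hnd.1 this
      rw [h0, add_zero] at h
      simp only [stepFlow] at h
      by_cases h1 : a = u ∧ b = v
      · exact step_cons_iff.2 (Or.inl ⟨h1.1, rest, by rw [h1.2]⟩)
      · rw [if_neg h1] at h
        by_cases h2 : a = v ∧ b = u
        · rw [if_pos h2] at h
          omega
        · rw [if_neg h2] at h
          omega
    · rw [stepFlow_eq_zero_of_ne he, zero_add] at h
      exact step_cons_iff.2 (Or.inr (ih
        (by simp only [walkEdges, List.nodup_cons] at hnd; exact hnd.2) h))

variable [Fintype ι]

/-- Divergence (net inflow) of an integer flow. -/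
def divg (f : ι → ι → ℤ) (v : ι) : ℤ := ∑ y, f y v

lemma divg_add (f g : ι → ι → ℤ) (v : ι) :
    divg (fun x y => f x y + g x y) v = divg f v + divg g v := by
  simp [divg, Finset.sum_add_distrib]

lemma divg_stepFlow (u v w : ι) :
    divg (stepFlow u v) w = (if w = v then 1 else 0) - if w = u then 1 else 0 := by
  simp only [divg, stepFlow]
  rw [Finset.sum_sub_distrib]
  congr 1
  · rcases eq_or_ne w v with rfl | hw
    · rw [Finset.sum_eq_single u] <;> simp +contextual
    · rw [Finset.sum_eq_zero] <;> simp +contextual [hw]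
  · rcases eq_or_ne w u with rfl | hw
    · rw [Finset.sum_eq_single v] <;> simp +contextual
    · rw [Finset.sum_eq_zero] <;> simp +contextual [hw]

lemma divg_chi (u : ι) (l : List ι) (w : ι) :
    divg (chi u l) w = (if w = lastV u l then 1 else 0) - if w = u then 1 else 0 := by
  induction l generalizing u with
  | nil => simp [divg]; split_ifs <;> simp_all
  | cons v rest ih =>
    have : divg (chi u (v :: rest)) w
        = divg (stepFlow u v) w + divg (chi v rest) w := divg_add _ _ w
    rw [this, divg_stepFlow, ih v, lastV_cons]
    ring

end Flow


section FD

variable [DecidableEq ι] [Fintype ι] {D : Matrix ι ι ℂ}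

/-- Flow decomposition: from a skew-symmetric, `≤ 1`-bounded integer flow supported
on the graph, a vertex of negative divergence admits a trail (positively) following
the flow to some vertex of positive divergence. -/
lemma flow_trail (hsym : ∀ x y, Adjac D x y → Adjac D y x) :
    ∀ (N : ℕ) (f : ι → ι → ℤ), (∑ p : ι × ι, (f p.1 p.2).natAbs) ≤ N →
    (∀ x y, f x y = - f y x) → (∀ x y, f x y ≤ 1) →
    (∀ x y, f x y ≠ 0 → Adjac D x y) →
    ∀ s, divg f s < 0 →
    ∃ t l, l ≠ [] ∧ List.Chain (Adjac D) s l ∧ lastV s l = t ∧ 0 < divg f t ∧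
      (walkEdges s l).Nodup ∧ (∀ a b, Step (s :: l) a b → f a b = 1) := by
  intro N
  induction N with
  | zero =>
    intro f hm hskew hbnd hsupp s hdiv
    exfalso
    have hall : ∀ x y, f x y = 0 := by
      intro x y
      have h1 : (f x y).natAbs ≤ ∑ p : ι × ι, (f p.1 p.2).natAbs := by
        simpa using Finset.single_le_sum (f := fun p : ι × ι => (f p.1 p.2).natAbs)
          (fun p _ => Nat.zero_le _) (Finset.mem_univ (x, y))
      omega
    rw [divg, Finset.sum_eq_zero (fun y _ => hall y s)] at hdiv
    omega
  | succ N ih =>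
    intro f hm hskew hbnd hsupp s hdiv
    -- find an outgoing edge at s
    have hex : ∃ y, f y s < 0 := by
      by_contra hno
      push_neg at hno
      have : (0 : ℤ) ≤ divg f s := Finset.sum_nonneg (fun y _ => hno y)
      omega
    obtain ⟨y, hy⟩ := hex
    have hfsy : f s y = 1 := by
      have h1 := hskew s y
      have h2 := hbnd s y
      omega
    have hadj : Adjac D s y := hsupp s y (by omega)
    have hsney : s ≠ y := hadj.1
    -- the reduced flow
    set f' : ι → ι → ℤ := fun x z =>
      f x z - (if x = s ∧ z = y then 1 else 0) + (if x = y ∧ z = s then 1 else 0) with hf'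
    have hf'sy : f' s y = 0 := by simp [hf', hfsy, hsney]
    have hf'ys : f' y s = 0 := by
      have := hskew y s
      simp [hf', hsney, Ne.symm hsney]
      omega
    have hf'other : ∀ x z, ¬(x = s ∧ z = y) → ¬(x = y ∧ z = s) → f' x z = f x z := by
      intro x z h1 h2; simp [hf', h1, h2]
    have hskew' : ∀ x z, f' x z = - f' z x := by
      intro x z
      by_cases h1 : x = s ∧ z = y
      · obtain ⟨rfl, rfl⟩ := h1; rw [hf'sy, hf'ys]; ring
      · by_cases h2 : x = y ∧ z = s
        · obtain ⟨rfl, rfl⟩ := h2; rw [hf'sy, hf'ys]; ring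
        · rw [hf'other x z h1 h2, hf'other z x (by tauto) (by tauto), hskew]
    have hbnd' : ∀ x z, f' x z ≤ 1 := by
      intro x z
      by_cases h1 : x = s ∧ z = y
      · obtain ⟨rfl, rfl⟩ := h1; rw [hf'sy]; omega
      · by_cases h2 : x = y ∧ z = s
        · obtain ⟨rfl, rfl⟩ := h2; rw [hf'ys]; omega
        · rw [hf'other x z h1 h2]; exact hbnd x z
    have hsupp' : ∀ x z, f' x z ≠ 0 → Adjac D x z := by
      intro x z h
      by_cases h1 : x = s ∧ z = y
      · obtain ⟨rfl, rfl⟩ := h1; exact hadj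
      · by_cases h2 : x = y ∧ z = s
        · obtain ⟨rfl, rfl⟩ := h2; exact hsym _ _ hadj
        · exact hsupp x z (by rwa [hf'other x z h1 h2] at h)
    have hm' : (∑ p : ι × ι, (f' p.1 p.2).natAbs) ≤ N := by
      have hlt : (∑ p : ι × ι, (f' p.1 p.2).natAbs) < ∑ p : ι × ι, (f p.1 p.2).natAbs := by
        apply Finset.sum_lt_sum
        · intro p _
          rcases p with ⟨x, z⟩
          by_cases h1 : x = s ∧ z = y
          · obtain ⟨rfl, rfl⟩ := h1; rw [hf'sy, hfsy]; simp
          · by_cases h2 : x = y ∧ z = s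
            · obtain ⟨rfl, rfl⟩ := h2
              rw [hf'ys]
              simp
            · rw [hf'other x z h1 h2]
        · refine ⟨(s, y), Finset.mem_univ _, ?_⟩
          simp only [hf'sy, hfsy]
          simp
      omega
    -- divergence of f'
    have hdivf' : ∀ w, divg f' w = divg f w + (if w = s then 1 else 0) - (if w = y then 1 else 0) := by
      intro w
      have e1 : (∑ x, (if x = s ∧ w = y then (1 : ℤ) else 0)) = if w = y then 1 else 0 := by
        rcases eq_or_ne w y with rfl | hw
        · rw [Finset.sum_eq_single s] <;> simp +contextual
        · rw [Finset.sum_eq_zero] <;> simp +contextual [hw]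
      have e2 : (∑ x, (if x = y ∧ w = s then (1 : ℤ) else 0)) = if w = s then 1 else 0 := by
        rcases eq_or_ne w s with rfl | hw
        · rw [Finset.sum_eq_single y] <;> simp +contextual
        · rw [Finset.sum_eq_zero] <;> simp +contextual [hw]
      simp only [divg, hf']
      rw [Finset.sum_add_distrib, Finset.sum_sub_distrib, e1, e2]
      ring
    by_cases hypos : 0 < divg f y
    · refine ⟨y, [y], by simp, by simp [List.Chain, hadj], by simp, hypos, by simp [walkEdges], ?_⟩
      intro a b hs
      obtain ⟨rfl, rfl⟩ := step_pair_iff.1 hs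
      exact hfsy
    · have hdivy : divg f' y < 0 := by
        have := hdivf' y
        rw [if_neg (Ne.symm hsney), if_pos rfl] at this
        omega
      obtain ⟨t, l, hlne, hchain, hlast, hdivt, hnd, hsteps⟩ :=
        ih f' hm' hskew' hbnd' hsupp' y hdivy
      have hts : t ≠ s := by
        intro h
        rw [h] at hdivt
        have := hdivf' s
        rw [if_pos rfl, if_neg hsney] at this
        omega
      have hty : t ≠ y := by
        intro h; rw [h] at hdivt; omega
      have hdivt0 : 0 < divg f t := by
        have := hdivf' t
        rw [if_neg hts, if_neg hty] at this
        omega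
      refine ⟨t, y :: l, by simp, List.chain_cons.2 ⟨hadj, hchain⟩, by simpa using hlast,
        hdivt0, ?_, ?_⟩
      · show (s(s, y) :: walkEdges y l).Nodup
        rw [List.nodup_cons]
        refine ⟨?_, hnd⟩
        intro hmem
        obtain ⟨a, b, hstep, heq⟩ := mem_walkEdges_iff.1 hmem
        have hab1 : f' a b = 1 := hsteps a b hstep
        rw [Sym2.eq_iff] at heq
        rcases heq with ⟨rfl, rfl⟩ | ⟨rfl, rfl⟩
        · rw [hf'sy] at hab1; omega
        · rw [hf'ys] at hab1; omega
      · intro a b hstep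
        rcases step_cons_iff.1 hstep with ⟨rfl, l₂, h⟩ | hstep'
        · rw [List.cons.injEq] at h
          rw [← h.1]
          exact hfsy
        · have h1 : f' a b = 1 := hsteps a b hstep'
          by_cases hc1 : a = s ∧ b = y
          · obtain ⟨rfl, rfl⟩ := hc1; rw [hf'sy] at h1; omega
          · by_cases hc2 : a = y ∧ b = s
            · obtain ⟨rfl, rfl⟩ := hc2; rw [hf'ys] at h1; omega
            · rw [← hf'other a b hc1 hc2]; exact h1

end FD


section Extract

lemma split_last_occ {a : ι} : ∀ {l : List ι}, a ∈ l →
    ∃ l₁ l₂, l = l₁ ++ a :: l₂ ∧ a ∉ l₂ := by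
  intro l
  induction l with
  | nil => simp
  | cons x t ih =>
    intro h
    by_cases ht : a ∈ t
    · obtain ⟨t₁, t₂, rfl, h2⟩ := ih ht
      exact ⟨x :: t₁, t₂, rfl, h2⟩
    · have : a = x := by
        rcases List.mem_cons.1 h with h | h
        · exact h
        · exact absurd h ht
      subst this
      exact ⟨[], t, rfl, ht⟩

lemma extract_simple {S : ι → ι → Prop} :
    ∀ (N : ℕ) (l : List ι) (u : ι), l.length ≤ N → List.Chain S u l →
    ∃ l', List.Chain S u l' ∧ lastV u l' = lastV u l ∧ (u :: l').Nodup ∧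
      (∀ x ∈ u :: l', x ∈ u :: l) ∧
      (∀ a b, Step (u :: l') a b → Step (u :: l) a b) := by
  intro N
  induction N with
  | zero =>
    intro l u hl _
    have : l = [] := List.length_eq_zero_iff.1 (Nat.le_zero.1 hl)
    subst this
    exact ⟨[], List.Chain.nil, rfl, by simp, by simp, fun a b h => h⟩
  | succ N ih =>
    intro l u hl hc
    by_cases hu : u ∈ l
    · obtain ⟨l₁, l₂, rfl, hno⟩ := split_last_occ hu
      have hc2 : List.Chain S u l₂ := by
        have := (chain_append_iff S u l₁ (u :: l₂)).1 hc
        exact ((List.chain_cons.1 this.2)).2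
      have hlen : l₂.length ≤ N := by
        have := List.length_append (as := l₁) (bs := u :: l₂)
        simp only [List.length_cons] at this
        omega
      obtain ⟨l', h1, h2, h3, h4, h5⟩ := ih l₂ u hlen hc2
      refine ⟨l', h1, ?_, h3, ?_, ?_⟩
      · rw [h2, lastV_append, lastV_cons]
      · intro x hx
        have := h4 x hx
        rcases List.mem_cons.1 this with rfl | h
        · exact List.mem_cons_self
        · exact List.mem_cons_of_mem _ (by simp [List.mem_append, h])
      · intro a b hst
        have := h5 a b hst
        have : Step ((u :: l₁) ++ (u :: l₂)) a b := step_append_left this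
        simpa using this
    · cases l with
      | nil => exact ⟨[], List.Chain.nil, rfl, by simp, by simp, fun a b h => h⟩
      | cons v t =>
        have hc' := List.chain_cons.1 hc
        obtain ⟨t', h1, h2, h3, h4, h5⟩ := ih t v (by simpa using hl) hc'.2
        have hunotin : u ∉ v :: t' := by
          intro hmem
          exact hu (h4 u hmem)
        refine ⟨v :: t', List.chain_cons.2 ⟨hc'.1, h1⟩, by simpa using h2,
          List.nodup_cons.2 ⟨hunotin, h3⟩, ?_, ?_⟩
        · intro x hx
          rcases List.mem_cons.1 hx with rfl | hx
          · exact List.mem_cons_self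
          · exact List.mem_cons_of_mem _ (h4 x hx)
        · intro a b hst
          rcases step_cons_iff.1 hst with ⟨rfl, l₂, h⟩ | hst'
          · rw [List.cons.injEq] at h
            exact ⟨[], t, by rw [h.1]; rfl⟩
          · have := h5 a b hst'
            have : Step ([u] ++ (v :: t)) a b := step_append_left this
            simpa using this

lemma reverse_cons_decomp (u : ι) (l : List ι) :
    (u :: l).reverse = lastV u l :: ((u :: l).reverse).tail := by
  have hne : (u :: l).reverse ≠ [] := by simp
  conv_lhs => rw [← List.cons_head_tail hne]
  congr 1
  rw [List.head_reverse]
  exact lastV_eq_getLast u l (by simp)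

lemma chain_reverse {S : ι → ι → Prop} (hS : ∀ x y, S x y → S y x) {u : ι} {l : List ι}
    (hc : List.Chain S u l) :
    List.Chain S (lastV u l) ((u :: l).reverse).tail := by
  have h1 : List.Chain' S (u :: l) := hc
  have h2 : List.Chain' (flip S) (u :: l) := List.IsChain.imp (fun ⦃a b⦄ h => hS a b h) h1
  have h3 : List.Chain' S ((u :: l).reverse) := List.isChain_reverse.2 h2
  rw [reverse_cons_decomp u l] at h3
  exact h3

lemma reverse_tail_cons (u v : ι) (t : List ι) :
    ((u :: v :: t).reverse).tail = ((v :: t).reverse).tail ++ [u] := by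
  have h1 : (u :: v :: t).reverse = (v :: t).reverse ++ [u] := by simp
  rw [h1, reverse_cons_decomp v t]
  simp

lemma lastV_reverse (u : ι) (l : List ι) :
    lastV (lastV u l) ((u :: l).reverse).tail = u := by
  cases l with
  | nil => simp
  | cons v t =>
    rw [lastV_cons, reverse_tail_cons, lastV_append]
    simp

lemma walkEdges_reverse : ∀ (l : List ι) (u : ι),
    walkEdges (lastV u l) ((u :: l).reverse).tail = (walkEdges u l).reverse := by
  intro l
  induction l with
  | nil => intro u; simp [walkEdges]
  | cons v t ih =>
    intro u
    rw [lastV_cons, reverse_tail_cons, walkEdges_append, ih v, lastV_reverse]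
    simp [walkEdges, Sym2.eq_swap]

end Extract


section Trails

variable {D : Matrix ι ι ℂ} {i j : ι}

lemma isWalk_iff {p : List ι} : IsWalk D i j p ↔ List.Chain (Adjac D) i p ∧ lastV i p = j := by
  rw [IsWalk, lastV_eq_getLast]

lemma mem_pathSet_of_trail {p : List ι} (h : IsTrail D i j p) {x : ι} (hx : x ∈ i :: p) :
    x ∈ pathSet D i j := ⟨p, h, hx⟩

lemma nodup_walkEdges_of_nodup : ∀ {l : List ι} {u : ι}, (u :: l).Nodup → (walkEdges u l).Nodup := by
  intro l
  induction l with
  | nil => intro u _; simp [walkEdges]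
  | cons v t ih =>
    intro u hnd
    rw [List.nodup_cons] at hnd
    show (s(u, v) :: walkEdges v t).Nodup
    rw [List.nodup_cons]
    constructor
    · intro hmem
      exact hnd.1 (mem_of_mem_walkEdges hmem (by simp))
    · exact ih hnd.2

lemma step_fst_ne_lastV {l : List ι} {x₀ a b : ι} (hnd : (x₀ :: l).Nodup)
    (hst : Step (x₀ :: l) a b) : a ≠ lastV x₀ l := by
  obtain ⟨l₁, l₂, heq⟩ := hst
  intro hlast
  have h1 : lastV x₀ l ∈ b :: l₂ := by
    rcases l₁ with _ | ⟨c, t⟩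
    · rw [List.nil_append, List.cons.injEq] at heq
      rw [heq.2, lastV_cons]
      exact lastV_mem b l₂
    · rw [List.cons_append, List.cons.injEq] at heq
      rw [heq.2, lastV_append, lastV_cons, lastV_cons]
      exact lastV_mem b l₂
  have h3 : (a :: b :: l₂).Nodup := by
    rw [heq] at hnd
    exact (List.nodup_append.1 hnd).2.1
  rw [List.nodup_cons] at h3
  rw [← hlast] at h1
  exact h3.1 h1

/-- Split a trail at a vertex occurring on it. -/
lemma trail_split {u : ι} {p : List ι} (ht : IsTrail D i j p) (hu : u ∈ i :: p) :
    ∃ la lb, List.Chain (Adjac D) i la ∧ lastV i la = u ∧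
      List.Chain (Adjac D) u lb ∧ lastV u lb = j ∧
      walkEdges i p = walkEdges i la ++ walkEdges u lb ∧
      (∀ x ∈ i :: la, x ∈ i :: p) ∧ (∀ x ∈ u :: lb, x ∈ i :: p) := by
  obtain ⟨⟨hch, hlast⟩, hnd⟩ := ht
  rw [lastV_eq_getLast] at hlast
  rcases List.mem_cons.1 hu with rfl | hu
  · exact ⟨[], p, List.Chain.nil, rfl, hch, hlast, rfl, by simp, fun x hx => hx⟩
  · obtain ⟨p₁, p₂, rfl⟩ := List.append_of_mem hu
    have hsplit := (chain_append_iff (Adjac D) i (p₁ ++ [u]) p₂).1 (by simpa using hch)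
    have hlastu : lastV i (p₁ ++ [u]) = u := by rw [lastV_append]; simp
    refine ⟨p₁ ++ [u], p₂, hsplit.1, hlastu, ?_, ?_, ?_, ?_, ?_⟩
    · have := hsplit.2; rwa [hlastu] at this
    · rw [← hlastu, ← lastV_append]
      simpa using hlast
    · have := walkEdges_append i (p₁ ++ [u]) p₂
      rw [hlastu] at this
      simpa using this
    · intro x hx
      rcases List.mem_cons.1 hx with rfl | hx
      · exact List.mem_cons_self
      · simp only [List.mem_append, List.mem_cons, List.mem_singleton] at hx ⊢
        tauto
    · intro x hx
      rcases List.mem_cons.1 hx with rfl | hx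
      · simp
      · simp only [List.mem_cons, List.mem_append]
        tauto

/-- Glue two edge-disjoint trails starting at `s` into membership of `s` in the path set. -/
lemma glue_trails (hsym : ∀ x y, Adjac D x y → Adjac D y x) {s : ι} {p₁ p₂ : List ι}
    (h1 : List.Chain (Adjac D) s p₁) (h1l : lastV s p₁ = i)
    (h1nd : (walkEdges s p₁).Nodup)
    (h2 : List.Chain (Adjac D) s p₂) (h2l : lastV s p₂ = j) (h2ne : p₂ ≠ [])
    (h2nd : (walkEdges s p₂).Nodup)
    (hdisj : ∀ e ∈ walkEdges s p₁, e ∉ walkEdges s p₂) :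
    s ∈ pathSet D i j := by
  set rt := ((s :: p₁).reverse).tail with hrt
  have hchain_rt : List.Chain (Adjac D) i rt := by
    have := chain_reverse hsym h1
    rwa [h1l] at this
  have hlast_rt : lastV i rt = s := by
    have := lastV_reverse s p₁
    rwa [h1l] at this
  have hchain : List.Chain (Adjac D) i (rt ++ p₂) := by
    rw [chain_append_iff]
    exact ⟨hchain_rt, by rwa [hlast_rt]⟩
  have hlastfull : lastV i (rt ++ p₂) = j := by
    rw [lastV_append, hlast_rt, h2l]
  have hedges : walkEdges i (rt ++ p₂) = (walkEdges s p₁).reverse ++ walkEdges s p₂ := by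
    rw [walkEdges_append, hlast_rt]
    congr 1
    have := walkEdges_reverse p₁ s
    rwa [h1l] at this
  have hndfull : (walkEdges i (rt ++ p₂)).Nodup := by
    rw [hedges, List.nodup_append]
    exact ⟨List.nodup_reverse.2 h1nd, h2nd, by
      intro e he b hb heq
      exact hdisj e (List.mem_reverse.1 he) (heq ▸ hb)⟩
  have hmem : s ∈ i :: (rt ++ p₂) := by
    have : s ∈ i :: rt := hlast_rt ▸ lastV_mem i rt
    rcases List.mem_cons.1 this with h | h
    · exact h ▸ List.mem_cons_self
    · exact List.mem_cons_of_mem _ (List.mem_append_left _ h)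
  exact mem_pathSet_of_trail ⟨isWalk_iff.2 ⟨hchain, hlastfull⟩, hndfull⟩ hmem

end Trails


section Crossing

variable {Rr : ι → Prop}

lemma exists_crossing : ∀ {l : List ι} {x₀ : ι}, Rr x₀ → ¬ Rr (lastV x₀ l) →
    ∃ a b, Step (x₀ :: l) a b ∧ Rr a ∧ ¬ Rr b := by
  intro l
  induction l with
  | nil => intro x₀ h1 h2; exact absurd h1 h2
  | cons v t ih =>
    intro x₀ h1 h2
    by_cases hv : Rr v
    · obtain ⟨a, b, hst, ha, hb⟩ := ih hv (by simpa using h2)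
      exact ⟨a, b, step_cons_iff.2 (Or.inr hst), ha, hb⟩
    · exact ⟨x₀, v, ⟨[], t, rfl⟩, h1, hv⟩

lemma all_not_R : ∀ {l : List ι} {v : ι}, ¬ Rr v →
    (∀ a b, Step (v :: l) a b → Rr b → Rr a) → ∀ x ∈ v :: l, ¬ Rr x := by
  intro l
  induction l with
  | nil =>
    intro v hv _ x hx
    rcases List.mem_cons.1 hx with rfl | hx
    · exact hv
    · simp at hx
  | cons y t ih =>
    intro v hv hnore x hx
    have hy : ¬ Rr y := by
      intro hy
      exact hv (hnore v y ⟨[], t, rfl⟩ hy)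
    rcases List.mem_cons.1 hx with rfl | hx
    · exact hv
    · refine ih hy ?_ x hx
      intro a b hst
      exact hnore a b (step_cons_iff.2 (Or.inr hst))

lemma drop_of_step {l l₁ l₂ : List ι} {a b : ι} (h : l = l₁ ++ a :: b :: l₂) :
    l.drop (l₁.length + 1) = b :: l₂ := by
  subst h
  have h2 : l₁ ++ a :: b :: l₂ = (l₁ ++ [a]) ++ b :: l₂ := by simp
  have h3 : l₁.length + 1 = (l₁ ++ [a]).length := by simp
  rw [h2, h3]
  exact List.drop_left

/-- Uniqueness of the crossing step along a walk that never re-enters `Rr`. -/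
lemma cross_unique {X : List ι}
    (hnore : ∀ a b, Step X a b → Rr b → Rr a)
    {a b a' b' : ι} (h1 : Step X a b) (h2 : Step X a' b')
    (hb : ¬ Rr b) (ha' : Rr a') (hb' : ¬ Rr b') (ha : Rr a) :
    a = a' ∧ b = b' := by
  -- by symmetry, reduce to the case of ordered positions
  obtain ⟨l₁, l₂, he1⟩ := h1
  obtain ⟨l₁', l₂', he2⟩ := h2
  rcases lt_trichotomy l₁.length l₁'.length with hlt | heqn | hlt
  · exfalso
    -- a' occurs in b :: l₂, which is all outside Rr
    have hd1 : X.drop (l₁.length + 1) = b :: l₂ := drop_of_step he1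
    have hd2 : X.drop l₁'.length = a' :: b' :: l₂' := by
      subst he2
      exact List.drop_left
    have hmem : a' ∈ b :: l₂ := by
      have h3 : X.drop l₁'.length = (b :: l₂).drop (l₁'.length - (l₁.length + 1)) := by
        rw [← hd1, List.drop_drop]
        congr 1
        omega
      have : a' ∈ X.drop l₁'.length := by rw [hd2]; exact List.mem_cons_self
      rw [h3] at this
      exact List.mem_of_mem_drop this
    have hall := all_not_R hb (fun c d hst hr => hnore c d
      (by obtain ⟨w, m, hm⟩ := hst; exact ⟨l₁ ++ a :: w, m, by rw [he1, hm]; simp⟩)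
      hr) a' hmem
    exact hall ha'
  · -- same position
    obtain ⟨-, h5⟩ := List.append_inj (he1.symm.trans he2) heqn
    rw [List.cons.injEq] at h5
    obtain ⟨h6, h7⟩ := h5
    rw [List.cons.injEq] at h7
    exact ⟨h6, h7.1⟩
  · exfalso
    have hd1 : X.drop (l₁'.length + 1) = b' :: l₂' := drop_of_step he2
    have hd2 : X.drop l₁.length = a :: b :: l₂ := by
      subst he1
      exact List.drop_left
    have hmem : a ∈ b' :: l₂' := by
      have h3 : X.drop l₁.length = (b' :: l₂').drop (l₁.length - (l₁'.length + 1)) := by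
        rw [← hd1, List.drop_drop]
        congr 1
        omega
      have : a ∈ X.drop l₁.length := by rw [hd2]; exact List.mem_cons_self
      rw [h3] at this
      exact List.mem_of_mem_drop this
    have hall := all_not_R hb' (fun c d hst hr => hnore c d
      (by obtain ⟨w, m, hm⟩ := hst; exact ⟨l₁' ++ a' :: w, m, by rw [he2, hm]; simp⟩)
      hr) a hmem
    exact hall ha

lemma rtg_to_chain {r : ι → ι → Prop} {x y : ι} (h : Relation.ReflTransGen r x y) :
    ∃ l, List.Chain r x l ∧ lastV x l = y := by
  induction h with
  | refl => exact ⟨[], List.Chain.nil, rfl⟩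
  | @tail b c hxy hr ih =>
    obtain ⟨l, hc, hl⟩ := ih
    refine ⟨l ++ [c], ?_, ?_⟩
    · rw [chain_append_iff]
      exact ⟨hc, by rw [hl]; exact List.Chain.cons hr List.Chain.nil⟩
    · rw [lastV_append]
      simp

end Crossing


section ChiBnd

variable [DecidableEq ι]

lemma chi_bnd {x y : ι} : ∀ {l : List ι} {u : ι}, (walkEdges u l).Nodup →
    chi u l x y ≤ 1 ∧ -1 ≤ chi u l x y := by
  intro l
  induction l with
  | nil => intro u _; simp
  | cons v rest ih =>
    intro u hnd
    have hnd' : (walkEdges v rest).Nodup := by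
      simp only [walkEdges, List.nodup_cons] at hnd; exact hnd.2
    rw [chi_cons]
    by_cases he : s(x, y) = s(u, v)
    · have h0 : chi v rest x y = 0 := by
        by_contra h0
        have := chi_ne_zero_mem h0
        simp only [walkEdges, List.nodup_cons] at hnd
        rw [he] at this
        exact hnd.1 this
      rw [h0, add_zero]
      unfold stepFlow
      split <;> split <;> omega
    · rw [stepFlow_eq_zero_of_ne he, zero_add]
      exact ih hnd'

lemma divg_sub [Fintype ι] (f g : ι → ι → ℤ) (v : ι) :
    divg (fun x y => f x y - g x y) v = divg f v - divg g v := by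
  simp [divg, Finset.sum_sub_distrib]

end ChiBnd

section KeyLemma

variable [DecidableEq ι] [Fintype ι] {D : Matrix ι ι ℂ}

lemma key_step (hsym : ∀ x y, Adjac D x y → Adjac D y x)
    {i j : ι} (hij : i ≠ j) {u w : ι}
    (hu : u ∈ pathSet D i j) (hw : w ∈ pathSet D i j)
    {q₁ : ι} {qrest : List ι}
    (hq : List.Chain (Adjac D) u (q₁ :: qrest))
    (hqlast : lastV u (q₁ :: qrest) = w)
    (hqnd : (u :: q₁ :: qrest).Nodup)
    (hq₁ : q₁ ∉ pathSet D i j) : False := by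
  classical
  obtain ⟨pu, htu, humem⟩ := hu
  obtain ⟨pw, htw, hwmem⟩ := hw
  obtain ⟨la, lb, hcla, hlau, hclb, hlbj, hEU, hmemla, hmemlb⟩ := trail_split htu humem
  obtain ⟨law, lbw, hclaw, hlaww, hclbw, hlbwj, hEW, hmemlaw, hmemlbw⟩ := trail_split htw hwmem
  have hPu : ∀ x ∈ i :: pu, x ∈ pathSet D i j := fun x hx => mem_pathSet_of_trail htu hx
  have hPw : ∀ x ∈ i :: pw, x ∈ pathSet D i j := fun x hx => mem_pathSet_of_trail htw hx
  have hiP : i ∈ pathSet D i j := hPu i (List.mem_cons_self)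
  have hjP : j ∈ pathSet D i j := by
    apply hPu j
    rw [← (isWalk_iff.1 htu.1).2]
    exact lastV_mem i pu
  have hq₁i : q₁ ≠ i := fun h => hq₁ (h ▸ hiP)
  have hq₁j : q₁ ≠ j := fun h => hq₁ (h ▸ hjP)
  have hAdjuq₁ : Adjac D u q₁ := (List.chain_cons.1 hq).1
  -- edge endpoint facts
  have hndU : (walkEdges i la ++ walkEdges u lb).Nodup := hEU ▸ htu.2
  have hEAP : ∀ e ∈ walkEdges i la, ∀ x ∈ e, x ∈ pathSet D i j := by
    intro e he x hx
    exact hPu x (hmemla x (mem_of_mem_walkEdges he hx))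
  have hEA2P : ∀ e ∈ walkEdges u lb, ∀ x ∈ e, x ∈ pathSet D i j := by
    intro e he x hx
    exact hPu x (hmemlb x (mem_of_mem_walkEdges he hx))
  have hEB2P : ∀ e ∈ walkEdges w lbw, ∀ x ∈ e, x ∈ pathSet D i j := by
    intro e he x hx
    exact hPw x (hmemlbw x (mem_of_mem_walkEdges he hx))
  -- the walk X from q₁ backwards along la to i
  set rt := ((i :: la).reverse).tail with hrt
  set Xtail : List ι := u :: rt with hXtail
  have hchainX : List.Chain (Adjac D) q₁ Xtail := by
    rw [hXtail]
    refine List.chain_cons.2 ⟨hsym _ _ hAdjuq₁, ?_⟩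
    have := chain_reverse hsym hcla
    rwa [hlau] at this
  have hlastX : lastV q₁ Xtail = i := by
    rw [hXtail, lastV_cons, ← hlau, hrt]
    exact lastV_reverse i la
  have hedgesX : walkEdges q₁ Xtail = s(q₁, u) :: (walkEdges i la).reverse := by
    rw [hXtail]
    show s(q₁, u) :: walkEdges u rt = _
    congr 1
    rw [hrt, ← hlau]
    exact walkEdges_reverse la i
  have hndX : (walkEdges q₁ Xtail).Nodup := by
    rw [hedgesX, List.nodup_cons]
    constructor
    · intro hmem
      rw [List.mem_reverse] at hmem
      exact hq₁ (hEAP _ hmem q₁ (by simp))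
    · exact List.nodup_reverse.2 (List.nodup_append.1 hndU).1
  set f₁ : ι → ι → ℤ := chi q₁ Xtail with hf₁
  set Rr : ι → Prop := fun v => Relation.ReflTransGen (fun x y => Adjac D x y ∧ f₁ x y ≠ 1) q₁ v
    with hRr
  have hRq₁ : Rr q₁ := Relation.ReflTransGen.refl
  have hchainXNe : List.Chain Ne q₁ Xtail := List.Chain.imp (fun a b h => h.1) hchainX
  have hcross_toX : ∀ a b, Adjac D a b → Rr a → ¬ Rr b → Step (q₁ :: Xtail) a b := by
    intro a b hadj ha hb
    have h1 : f₁ a b = 1 := by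
      by_contra h1
      exact hb (Relation.ReflTransGen.tail ha ⟨hadj, h1⟩)
    exact chi_eq_one_step hndX h1
  have hnoreX : ∀ a b, Step (q₁ :: Xtail) a b → Rr b → Rr a := by
    intro a b hst hbR
    have h1 : f₁ a b = 1 := chi_step_eq_one hndX hchainXNe hst
    have h2 : f₁ b a ≠ 1 := by
      have hsk := chi_skew q₁ Xtail b a
      simp only [hf₁] at h1 ⊢
      omega
    have hadj : Adjac D b a := hsym _ _ (step_of_chain hchainX hst)
    exact Relation.ReflTransGen.tail hbR ⟨hadj, h2⟩
  -- any crossing is the unique crossing step of X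
  have hqrest_ne : qrest ≠ [] := by
    intro h
    subst h
    have : q₁ = w := by simpa using hqlast
    exact hq₁ (this ▸ (⟨pw, htw, hwmem⟩ : w ∈ pathSet D i j))
  have hlastq : lastV q₁ qrest = w := by simpa using hqlast
  have hchainY : List.Chain (Adjac D) q₁ (qrest ++ lbw) := by
    rw [chain_append_iff]
    refine ⟨(List.chain_cons.1 hq).2, ?_⟩
    rwa [hlastq]
  have hlastY : lastV q₁ (qrest ++ lbw) = j := by
    rw [lastV_append, hlastq, hlbwj]
  have hchainX₂ : List.Chain (Adjac D) q₁ (u :: lb) :=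
    List.chain_cons.2 ⟨hsym _ _ hAdjuq₁, hclb⟩
  have hlastX₂ : lastV q₁ (u :: lb) = j := by rw [lastV_cons, hlbj]
  have hjR : Rr j := by
    by_contra hjR
    obtain ⟨a, b, stepY, ra, rb⟩ := exists_crossing hRq₁ (hlastY ▸ hjR :
      ¬ Rr (lastV q₁ (qrest ++ lbw)))
    have adjab : Adjac D a b := step_of_chain hchainY stepY
    have stepXab : Step (q₁ :: Xtail) a b := hcross_toX a b adjab ra rb
    obtain ⟨a', b', stepX₂, ra', rb'⟩ := exists_crossing hRq₁ (hlastX₂ ▸ hjR :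
      ¬ Rr (lastV q₁ (u :: lb)))
    have adjab' : Adjac D a' b' := step_of_chain hchainX₂ stepX₂
    have stepXab' : Step (q₁ :: Xtail) a' b' := hcross_toX a' b' adjab' ra' rb'
    obtain ⟨haa, hbb⟩ := cross_unique hnoreX stepXab stepXab' rb ra' rb' ra
    set e : Sym2 ι := s(a, b) with he
    have heY : e ∈ walkEdges q₁ (qrest ++ lbw) := mem_walkEdges_iff.2 ⟨a, b, stepY, rfl⟩
    have heX₂ : e ∈ walkEdges q₁ (u :: lb) := by
      rw [he, haa, hbb]
      exact mem_walkEdges_iff.2 ⟨a', b', stepX₂, rfl⟩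
    have heYsplit : e ∈ walkEdges q₁ qrest ++ walkEdges w lbw := by
      have := walkEdges_append q₁ qrest lbw
      rw [hlastq] at this
      rwa [this] at heY
    have heX₂' : e = s(q₁, u) ∨ e ∈ walkEdges u lb := by
      have : walkEdges q₁ (u :: lb) = s(q₁, u) :: walkEdges u lb := rfl
      rw [this] at heX₂
      exact List.mem_cons.1 heX₂
    rcases heX₂' with heq | hmem
    · -- e = s(q₁,u) must be an edge of Y
      rcases List.mem_append.1 heYsplit with h | h
      · -- u would be a vertex of qrest
        have : u ∈ q₁ :: qrest := mem_of_mem_walkEdges h (by rw [heq]; simp)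
        rw [List.nodup_cons] at hqnd
        rcases List.mem_cons.1 this with h' | h'
        · exact hAdjuq₁.1 h'
        · exact hqnd.1 (List.mem_cons_of_mem _ h')
      · -- q₁ would be in P
        exact hq₁ (hEB2P _ h q₁ (by rw [heq]; simp))
    · -- e ∈ EA2; but e ∈ edges X = {s(q₁,u)} ∪ EA
      have heX : e ∈ walkEdges q₁ Xtail := mem_walkEdges_iff.2 ⟨a, b, stepXab, rfl⟩
      rw [hedgesX] at heX
      rcases List.mem_cons.1 heX with heq | hmemA
      · exact hq₁ (hEA2P _ hmem q₁ (by rw [heq]; simp))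
      · rw [List.mem_reverse] at hmemA
        exact (List.disjoint_of_nodup_append hndU) hmemA hmem
  -- now build the residual path ρ and the flow f₂
  obtain ⟨l0, hc0, hl0⟩ := rtg_to_chain hjR
  obtain ⟨rl, hcρ, hlρ, hndρ, -, -⟩ := extract_simple l0.length l0 q₁ le_rfl hc0
  rw [hl0] at hlρ
  have hchainρ : List.Chain (Adjac D) q₁ rl := List.Chain.imp (fun a b h => h.1) hcρ
  have hndρE : (walkEdges q₁ rl).Nodup := nodup_walkEdges_of_nodup hndρ
  set f₂ : ι → ι → ℤ := fun x y => f₁ x y + chi q₁ rl x y with hf₂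
  have hskew₂ : ∀ x y, f₂ x y = - f₂ y x := by
    intro x y
    simp only [hf₂, hf₁]
    rw [chi_skew q₁ Xtail x y, chi_skew q₁ rl x y]
    ring
  have hbnd₂ : ∀ x y, f₂ x y ≤ 1 := by
    intro x y
    have h1 := chi_bnd (x := x) (y := y) (u := q₁) hndX
    have h2 := chi_bnd (x := x) (y := y) (u := q₁) hndρE
    rcases eq_or_ne (chi q₁ rl x y) 1 with hone | hne
    · have hstep : Step (q₁ :: rl) x y := chi_eq_one_step hndρE hone
      have hres := step_of_chain hcρ hstep
      have hne1 : chi q₁ Xtail x y ≠ 1 := by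
        have := hres.2
        simpa [hf₁] using this
      simp only [hf₂, hf₁]
      omega
    · simp only [hf₂, hf₁]
      omega
  have hsupp₂ : ∀ x y, f₂ x y ≠ 0 → Adjac D x y := by
    intro x y hne
    have : f₁ x y ≠ 0 ∨ chi q₁ rl x y ≠ 0 := by
      by_contra hcon
      push_neg at hcon
      simp only [hf₂, hcon.1, hcon.2] at hne
      exact hne rfl
    have hmem : s(x, y) ∈ walkEdges q₁ Xtail ∨ s(x, y) ∈ walkEdges q₁ rl := by
      rcases this with h | h
      · exact Or.inl (chi_ne_zero_mem h)
      · exact Or.inr (chi_ne_zero_mem h)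
    have : ∃ a b, Step (q₁ :: Xtail) a b ∧ s(x,y) = s(a,b) ∨
        Step (q₁ :: rl) a b ∧ s(x,y) = s(a,b) := by
      rcases hmem with h | h
      · obtain ⟨a, b, hs, heq⟩ := mem_walkEdges_iff.1 h
        exact ⟨a, b, Or.inl ⟨hs, heq⟩⟩
      · obtain ⟨a, b, hs, heq⟩ := mem_walkEdges_iff.1 h
        exact ⟨a, b, Or.inr ⟨hs, heq⟩⟩
    obtain ⟨a, b, hcase⟩ := this
    have hadj : Adjac D a b ∧ s(x,y) = s(a,b) := by
      rcases hcase with ⟨hs, heq⟩ | ⟨hs, heq⟩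
      · exact ⟨step_of_chain hchainX hs, heq⟩
      · exact ⟨step_of_chain hchainρ hs, heq⟩
    rcases Sym2.eq_iff.1 hadj.2 with ⟨rfl, rfl⟩ | ⟨rfl, rfl⟩
    · exact hadj.1
    · exact hsym _ _ hadj.1
  have hdiv₂ : ∀ v, divg f₂ v =
      ((if v = i then 1 else 0) - (if v = q₁ then 1 else 0)) +
      ((if v = j then 1 else 0) - (if v = q₁ then 1 else 0)) := by
    intro v
    have := divg_add f₁ (chi q₁ rl) v
    rw [hf₂]
    rw [this, hf₁, divg_chi, divg_chi, hlastX, hlρ]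
  have hdivq₁ : divg f₂ q₁ < 0 := by
    rw [hdiv₂ q₁, if_neg hq₁i, if_neg hq₁j, if_pos rfl]
    omega
  obtain ⟨t₁, L₁, hL₁ne, hL₁c, hL₁last, hL₁div, hL₁nd, hL₁steps⟩ :=
    flow_trail hsym _ f₂ le_rfl hskew₂ hbnd₂ hsupp₂ q₁ hdivq₁
  have ht₁ : t₁ = i ∨ t₁ = j := by
    by_contra hcon
    push_neg at hcon
    rw [hdiv₂ t₁, if_neg hcon.1, if_neg hcon.2] at hL₁div
    rcases eq_or_ne t₁ q₁ with rfl | h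
    · simp at hL₁div
    · rw [if_neg h] at hL₁div; simp at hL₁div
  have ht₁q : t₁ ≠ q₁ := by rcases ht₁ with rfl | rfl <;> [exact Ne.symm hq₁i; exact Ne.symm hq₁j]
  set f₃ : ι → ι → ℤ := fun x y => f₂ x y - chi q₁ L₁ x y with hf₃
  have hskew₃ : ∀ x y, f₃ x y = - f₃ y x := by
    intro x y
    simp only [hf₃]
    rw [hskew₂ x y, chi_skew q₁ L₁ x y]
    ring
  have hbnd₃ : ∀ x y, f₃ x y ≤ 1 := by
    intro x y
    have h1 := chi_bnd (x := x) (y := y) (u := q₁) hL₁nd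
    rcases eq_or_ne (chi q₁ L₁ x y) (-1) with hmone | hne
    · have hone : chi q₁ L₁ y x = 1 := by rw [chi_skew] at hmone; omega
      have hstep : Step (q₁ :: L₁) y x := chi_eq_one_step hL₁nd hone
      have := hL₁steps y x hstep
      have := hskew₂ x y
      simp only [hf₃]
      omega
    · have hb := hbnd₂ x y
      rcases eq_or_ne (chi q₁ L₁ x y) 1 with hone | hne2
      · simp only [hf₃]; omega
      · have h0 : chi q₁ L₁ x y = 0 := by omega
        simp only [hf₃]
        omega
  have hsupp₃ : ∀ x y, f₃ x y ≠ 0 → Adjac D x y := by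
    intro x y hne
    rcases eq_or_ne (chi q₁ L₁ x y) 0 with h0 | h0
    · apply hsupp₂
      simp only [hf₃, h0] at hne
      simpa using hne
    · have hmem := chi_ne_zero_mem h0
      obtain ⟨a, b, hs, heq⟩ := mem_walkEdges_iff.1 hmem
      have hadj : Adjac D a b := step_of_chain hL₁c hs
      rcases Sym2.eq_iff.1 heq with ⟨rfl, rfl⟩ | ⟨rfl, rfl⟩
      · exact hadj
      · exact hsym _ _ hadj
  have hdiv₃ : ∀ v, divg f₃ v = divg f₂ v -
      ((if v = t₁ then 1 else 0) - (if v = q₁ then 1 else 0)) := by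
    intro v
    have := divg_sub f₂ (chi q₁ L₁) v
    rw [hf₃, this, divg_chi, hL₁last]
  have hdivq₁3 : divg f₃ q₁ < 0 := by
    rw [hdiv₃ q₁, if_neg (Ne.symm ht₁q), if_pos rfl, hdiv₂ q₁, if_neg hq₁i, if_neg hq₁j,
      if_pos rfl]
    omega
  obtain ⟨t₂, L₂, hL₂ne, hL₂c, hL₂last, hL₂div, hL₂nd, hL₂steps⟩ :=
    flow_trail hsym _ f₃ le_rfl hskew₃ hbnd₃ hsupp₃ q₁ hdivq₁3
  have ht₂ : (t₁ = i ∧ t₂ = j) ∨ (t₁ = j ∧ t₂ = i) := by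
    have h2 := hL₂div
    rw [hdiv₃ t₂, hdiv₂ t₂] at h2
    have hA : t₂ = i ∨ t₂ = j := by
      by_contra hcon
      push_neg at hcon
      rw [if_neg hcon.1, if_neg hcon.2] at h2
      split_ifs at h2 <;> omega
    have hB : t₂ ≠ t₁ := by
      intro h
      rw [h, if_pos rfl, if_neg ht₁q] at h2
      rcases ht₁ with rfl | rfl
      · rw [if_pos rfl, if_neg hij] at h2; omega
      · rw [if_neg (Ne.symm hij), if_pos rfl] at h2; omega
    rcases ht₁ with rfl | rfl
    · rcases hA with rfl | rfl
      · exact absurd rfl hB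
      · exact Or.inl ⟨rfl, rfl⟩
    · rcases hA with rfl | rfl
      · exact Or.inr ⟨rfl, rfl⟩
      · exact absurd rfl hB
  have hdisj12 : ∀ e ∈ walkEdges q₁ L₁, e ∉ walkEdges q₁ L₂ := by
    intro e he1 he2
    obtain ⟨a, b, hs1, heq1⟩ := mem_walkEdges_iff.1 he1
    obtain ⟨c, d, hs2, heq2⟩ := mem_walkEdges_iff.1 he2
    have hf2ab : f₂ a b = 1 := hL₁steps a b hs1
    have hf3cd : f₃ c d = 1 := hL₂steps c d hs2
    have hchi1ab : chi q₁ L₁ a b = 1 :=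
      chi_step_eq_one hL₁nd (List.Chain.imp (fun a b h => h.1) hL₁c) hs1
    have heq : s(c, d) = s(a, b) := by rw [← heq1, ← heq2]
    rcases Sym2.eq_iff.1 heq with ⟨rfl, rfl⟩ | ⟨rfl, rfl⟩
    · simp only [hf₃] at hf3cd
      omega
    · have hsk := hskew₂ c d
      have hck := chi_skew q₁ L₁ c d
      simp only [hf₃] at hf3cd
      omega
  rcases ht₂ with ⟨ht1i, ht2j⟩ | ⟨ht1j, ht2i⟩
  · exact hq₁ (glue_trails hsym hL₁c (ht1i ▸ hL₁last) hL₁nd hL₂c (ht2j ▸ hL₂last)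
      hL₂ne hL₂nd hdisj12)
  · exact hq₁ (glue_trails hsym hL₂c (ht2i ▸ hL₂last) hL₂nd hL₁c (ht1j ▸ hL₁last)
      hL₁ne hL₁nd (fun e h2 h1 => hdisj12 e h1 h2))

end KeyLemma


section Unique

variable [DecidableEq ι] [Fintype ι] {D : Matrix ι ι ℂ}

lemma first_P_split (P : Set ι) : ∀ (l : List ι), (∃ x ∈ l, x ∈ P) →
    ∃ m w k, l = m ++ w :: k ∧ w ∈ P ∧ ∀ x ∈ m, x ∉ P := by
  classical
  intro l
  induction l with
  | nil => simp
  | cons v t ih =>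
    intro hex
    by_cases hv : v ∈ P
    · exact ⟨[], v, t, rfl, hv, by simp⟩
    · have : ∃ x ∈ t, x ∈ P := by
        obtain ⟨x, hx, hxP⟩ := hex
        rcases List.mem_cons.1 hx with rfl | hx
        · exact absurd hxP hv
        · exact ⟨x, hx, hxP⟩
      obtain ⟨m, w, k, heq, hw, hm⟩ := ih this
      refine ⟨v :: m, w, k, by rw [heq]; rfl, hw, ?_⟩
      intro x hx
      rcases List.mem_cons.1 hx with rfl | hx
      · exact hv
      · exact hm x hx

/-- The relation generated by edges leaving the path set. -/
def relP (D : Matrix ι ι ℂ) (i j : ι) (x y : ι) : Prop :=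
  Adjac D x y ∧ (x ∉ pathSet D i j ∨ y ∉ pathSet D i j)

lemma relP_symm (hsym : ∀ x y, Adjac D x y → Adjac D y x) {i j x y : ι}
    (h : relP D i j x y) : relP D i j y x :=
  ⟨hsym _ _ h.1, h.2.symm⟩

lemma relP_walk_unique (hsym : ∀ x y, Adjac D x y → Adjac D y x) {i j : ι} (hij : i ≠ j) :
    ∀ (n : ℕ) (l : List ι), l.length ≤ n → ∀ u, u ∈ pathSet D i j →
      List.Chain (relP D i j) u l → lastV u l ∈ pathSet D i j → u = lastV u l := by
  intro n
  induction n with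
  | zero =>
    intro l hl u _ _ _
    have : l = [] := List.length_eq_zero_iff.1 (Nat.le_zero.1 hl)
    subst this
    simp
  | succ n ih =>
    intro l hl u huP hch hlP
    cases l with
    | nil => simp
    | cons v t =>
      have hexP : ∃ x ∈ v :: t, x ∈ pathSet D i j := by
        refine ⟨lastV u (v :: t), ?_, hlP⟩
        rw [lastV_cons]
        exact lastV_mem v t
      obtain ⟨m, w', k, heq, hw'P, hmP⟩ := first_P_split _ _ hexP
      have heq2 : v :: t = (m ++ [w']) ++ k := by rw [heq]; simp
      have hchsplit := (chain_append_iff (relP D i j) u (m ++ [w']) k).1 (heq2 ▸ hch)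
      have hlastm : lastV u (m ++ [w']) = w' := by rw [lastV_append]; simp
      -- first, u = w'
      have huw : u = w' := by
        by_contra huw
        obtain ⟨l', hcl', hll', hndl', hmeml', -⟩ :=
          extract_simple (m ++ [w']).length (m ++ [w']) u le_rfl hchsplit.1
        rw [hlastm] at hll'
        cases l' with
        | nil => exact huw (by simpa using hll')
        | cons q₁ qrest' =>
          cases qrest' with
          | nil =>
            -- a single relP step between two members of the path set
            have hq₁w : q₁ = w' := by simpa using hll'
            have hrel : relP D i j u q₁ := (List.chain_cons.1 hcl').1
            rcases hrel.2 with h | h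
            · exact h huP
            · exact h (hq₁w ▸ hw'P)
          | cons q₂ qrest =>
            have hchAdj : List.Chain (Adjac D) u (q₁ :: q₂ :: qrest) :=
              List.Chain.imp (fun a b h => h.1) hcl'
            have hq₁ne_u : q₁ ≠ u := by
              rw [List.nodup_cons] at hndl'
              intro h
              exact hndl'.1 (h ▸ List.mem_cons_self)
            have hq₁ne_w : q₁ ≠ w' := by
              intro h
              have h1 : lastV q₁ (q₂ :: qrest) = w' := by simpa using hll'
              have h2 : lastV q₂ qrest ∈ q₂ :: qrest := lastV_mem q₂ qrest
              rw [List.nodup_cons, List.nodup_cons] at hndl'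
              apply hndl'.2.1
              rw [lastV_cons] at h1
              rw [h, ← h1]
              exact h2
            have hq₁P : q₁ ∉ pathSet D i j := by
              have hq₁mem : q₁ ∈ u :: (m ++ [w']) := hmeml' q₁ (by simp)
              rcases List.mem_cons.1 hq₁mem with h | h
              · exact absurd h hq₁ne_u
              · rcases List.mem_append.1 h with h | h
                · exact hmP q₁ h
                · exact absurd (by simpa using h) hq₁ne_w
            exact key_step hsym hij huP hw'P hchAdj (by simpa using hll') hndl' hq₁P
      -- then recurse along k
      subst huw
      have hlast2 : lastV u k = lastV u (v :: t) := by
        rw [heq2, lastV_append, hlastm]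
      have hlen : k.length ≤ n := by
        have : (v :: t).length = (m ++ [u]).length + k.length := by
          rw [heq2, List.length_append]
        simp only [List.length_cons, List.length_append] at this hl
        omega
      have h5 := hchsplit.2
      rw [hlastm] at h5
      have := ih k hlen u hw'P h5 (by rwa [hlast2])
      rwa [hlast2] at this

lemma pathSet_class_unique (hsym : ∀ x y, Adjac D x y → Adjac D y x) {i j : ι} (hij : i ≠ j)
    {x y : ι} (h : Relation.ReflTransGen (relP D i j) x y)
    (hx : x ∈ pathSet D i j) (hy : y ∈ pathSet D i j) : x = y := by
  obtain ⟨l, hc, hl⟩ := rtg_to_chain h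
  have := relP_walk_unique hsym hij l.length l le_rfl x hx hc (hl ▸ hy)
  rw [hl] at this
  exact this

end Unique


section Extension

variable [DecidableEq ι] [Fintype ι] {D : Matrix ι ι ℂ}

open Classical in
/-- Extension of a function on the path set to all vertices, constant along branches. -/
noncomputable def extFun (D : Matrix ι ι ℂ) (i j : ι) (a' : ↥(pathSet D i j) → ℂ) (v : ι) : ℂ :=
  if h : ∃ x, x ∈ pathSet D i j ∧ Relation.ReflTransGen (relP D i j) v x
  then a' ⟨h.choose, h.choose_spec.1⟩ else 0

lemma extFun_mem (hsym : ∀ x y, Adjac D x y → Adjac D y x) {i j : ι} (hij : i ≠ j)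
    (a' : ↥(pathSet D i j) → ℂ) {v : ι} (hv : v ∈ pathSet D i j) :
    extFun D i j a' v = a' ⟨v, hv⟩ := by
  have hex : ∃ x, x ∈ pathSet D i j ∧ Relation.ReflTransGen (relP D i j) v x :=
    ⟨v, hv, Relation.ReflTransGen.refl⟩
  rw [extFun, dif_pos hex]
  congr 1
  exact Subtype.ext (pathSet_class_unique hsym hij hex.choose_spec.2 hv hex.choose_spec.1).symm

lemma extFun_rel (hsym : ∀ x y, Adjac D x y → Adjac D y x) {i j : ι} (hij : i ≠ j)
    (a' : ↥(pathSet D i j) → ℂ) {x y : ι} (h : relP D i j x y) :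
    extFun D i j a' x = extFun D i j a' y := by
  by_cases hex : ∃ z, z ∈ pathSet D i j ∧ Relation.ReflTransGen (relP D i j) y z
  · obtain ⟨z, hz, hrtg⟩ := hex
    have hex1 : ∃ z, z ∈ pathSet D i j ∧ Relation.ReflTransGen (relP D i j) x z :=
      ⟨z, hz, Relation.ReflTransGen.head h hrtg⟩
    have hex2 : ∃ z, z ∈ pathSet D i j ∧ Relation.ReflTransGen (relP D i j) y z :=
      ⟨z, hz, hrtg⟩
    rw [extFun, dif_pos hex1, extFun, dif_pos hex2]
    have hsymRel : Symmetric (relP D i j) := fun a b hab => relP_symm hsym hab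
    have hRTG : Relation.ReflTransGen (relP D i j) hex1.choose hex2.choose := by
      have h1 : Relation.ReflTransGen (relP D i j) hex1.choose x :=
        by
          haveI : Std.Symm (relP D i j) := ⟨fun a b h => hsymRel h⟩
          exact Std.Symm.symm _ _ hex1.choose_spec.2
      exact (h1.tail h).trans hex2.choose_spec.2
    congr 1
    exact Subtype.ext
      (pathSet_class_unique hsym hij hRTG hex1.choose_spec.1 hex2.choose_spec.1)
  · have hex1 : ¬ ∃ z, z ∈ pathSet D i j ∧ Relation.ReflTransGen (relP D i j) x z := by
      intro ⟨z, hz, hrtg⟩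
      rcases Relation.ReflTransGen.cases_head hrtg with heq | ⟨c, hxc, hcz⟩
      · subst heq
        exact hex ⟨x, hz, Relation.ReflTransGen.single (relP_symm hsym h)⟩
      · exact hex ⟨z, hz, Relation.ReflTransGen.head (relP_symm hsym h)
          (Relation.ReflTransGen.head hxc hcz)⟩
    rw [extFun, dif_neg hex1, extFun, dif_neg hex]

end Extension

end NCG


lemma commD_apply {ι : Type*} [Finite ι] (D : Matrix ι ι ℂ) (a : ι → ℂ) (x y : ι) :
    commD D a x y = D x y * a y - a x * D x y := by
  letI := Fintype.ofFinite ι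
  letI := Classical.decEq ι
  unfold commD
  rw [Matrix.sub_apply, Matrix.mul_diagonal, Matrix.diagonal_mul]

lemma ncDist_self {ι : Type*} [Finite ι] (D : Matrix ι ι ℂ) (v : ι) : ncDist D v v = 0 := by
  unfold ncDist
  refine le_antisymm ?_ zero_le
  refine iSup₂_le fun a ha => ?_
  simp

theorem stmt4 {n : ℕ} (D : Matrix (Fin n) (Fin n) ℂ)
    (hherm : D.IsHermitian) (hdiag : ∀ i, D i i = 0) (i j : Fin n)
    (hconn : Conn D i j) (hi : i ∈ pathSet D i j) (hj : j ∈ pathSet D i j) :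
    ncDist D i j =
      ncDist (D.submatrix (Subtype.val : pathSet D i j → Fin n) Subtype.val)
        ⟨i, hi⟩ ⟨j, hj⟩ := by
  classical
  have hsym : ∀ x y, Adjac D x y → Adjac D y x := by
    intro x y h
    refine ⟨h.1.symm, fun h0 => h.2 ?_⟩
    have := hherm.apply x y
    rw [← this, h0, star_zero]
  by_cases hij : i = j
  · subst hij
    have h0 : (⟨i, hi⟩ : ↥(pathSet D i i)) = ⟨i, hj⟩ := rfl
    rw [h0, ncDist_self, ncDist_self]
  · apply le_antisymm
    · refine iSup₂_le fun a ha => ?_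
      refine le_iSup₂_of_le (fun s => a ↑s) ?_ ?_
      · have hcomm : commD (D.submatrix (Subtype.val : pathSet D i j → Fin n) Subtype.val)
            (fun s => a ↑s) = (commD D a).submatrix Subtype.val Subtype.val := by
          ext s t
          rw [Matrix.submatrix_apply, commD_apply, commD_apply, Matrix.submatrix_apply]
        rw [hcomm]
        refine le_trans ?_ ha
        unfold opNorm
        exact @norm_submatrix_le (Fin n) (↥(pathSet D i j)) (Fintype.ofFinite _)
          (Classical.decEq _) (Fintype.ofFinite _) (Classical.decEq _)
          (commD D a) Subtype.val Subtype.val_injective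
      · exact le_of_eq rfl
    · refine iSup₂_le fun a' ha' => ?_
      set a : Fin n → ℂ := NCG.extFun D i j a' with hadef
      have haP : ∀ (s : ↥(pathSet D i j)), a ↑s = a' s := by
        intro s
        rw [hadef, NCG.extFun_mem hsym hij a' s.2]
      have hsub : (commD D a).submatrix (Subtype.val : pathSet D i j → Fin n) Subtype.val
          = commD (D.submatrix (Subtype.val : pathSet D i j → Fin n) Subtype.val) a' := by
        ext s t
        rw [Matrix.submatrix_apply, commD_apply, commD_apply, Matrix.submatrix_apply,
          haP, haP]
      have hsupp : ∀ x y, commD D a x y ≠ 0 →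
          (∃ k : ↥(pathSet D i j), ↑k = x) ∧ (∃ k : ↥(pathSet D i j), ↑k = y) := by
        intro x y hne
        rw [commD_apply] at hne
        have hD : D x y ≠ 0 := fun h => hne (by rw [h]; ring)
        have hxy : x ≠ y := by rintro rfl; exact hne (by ring)
        have hadj : Adjac D x y := ⟨hxy, hD⟩
        have hrelcase : (x ∉ pathSet D i j ∨ y ∉ pathSet D i j) → False := by
          intro hcase
          apply hne
          have hax : a x = a y := NCG.extFun_rel hsym hij a' ⟨hadj, hcase⟩
          rw [hax]
          ring
        by_cases hx : x ∈ pathSet D i j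
        · by_cases hy : y ∈ pathSet D i j
          · exact ⟨⟨⟨x, hx⟩, rfl⟩, ⟨⟨y, hy⟩, rfl⟩⟩
          · exact absurd (Or.inr hy) (fun h => hrelcase h)
        · exact absurd (Or.inl hx) (fun h => hrelcase h)
      refine le_iSup₂_of_le a ?_ ?_
      · have h1 : opNorm (commD D a)
            ≤ opNorm ((commD D a).submatrix (Subtype.val : pathSet D i j → Fin n)
              Subtype.val) := by
          unfold opNorm
          exact @norm_le_norm_submatrix (Fin n) (↥(pathSet D i j)) (Fintype.ofFinite _)
            (Classical.decEq _) (Fintype.ofFinite _) (Classical.decEq _)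
            (commD D a) Subtype.val Subtype.val_injective hsupp
        rw [hsub] at h1
        exact le_trans h1 ha' 
      · apply le_of_eq
        congr 1
        rw [show a i = a' ⟨i, hi⟩ from haP ⟨i, hi⟩, show a j = a' ⟨j, hj⟩ from haP ⟨j, hj⟩]
end

section
/- Let D be a Hermitian Dirac operator with zero diagonal on n vertices and let {i,j} be a bridge of G_D, i.e. an edge of G_D whose removal disconnects i from j. Then d^D(i,j) = w^D(i,j) = ℓ^D(i,j), i.e. the noncommutative distance between i and j equals |D_{ij}|^{-1} and equals the geodesic distance. -/
open scoped ENNReal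

/-! ### Auxiliary lemmas -/

lemma opNorm_eq' {n : ℕ} (M : Matrix (Fin n) (Fin n) ℂ) :
    opNorm M = ‖Matrix.toEuclideanCLM (𝕜 := ℂ) M‖ := by
  unfold opNorm
  congr!

lemma commD_apply' {n : ℕ} (D : Matrix (Fin n) (Fin n) ℂ) (a : Fin n → ℂ) (u v : Fin n) :
    commD D a u v = D u v * (a v - a u) := by
  have h : commD D a = D * Matrix.diagonal a - Matrix.diagonal a * D := by
    unfold commD; congr!
  rw [h]
  simp only [Matrix.sub_apply, Matrix.mul_diagonal, Matrix.diagonal_mul]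
  ring

lemma entry_le' {n : ℕ} (M : Matrix (Fin n) (Fin n) ℂ) (u v : Fin n) :
    ‖M u v‖ ≤ ‖Matrix.toEuclideanCLM (𝕜 := ℂ) M‖ := by
  have h := (Matrix.toEuclideanCLM (𝕜 := ℂ) M).le_opNorm
    ((WithLp.equiv 2 (Fin n → ℂ)).symm (Pi.single v 1))
  change ‖(WithLp.equiv 2 (Fin n → ℂ)).symm (Matrix.toLin' M (Pi.single v 1))‖ ≤ _ at h
  have hx : ‖(WithLp.equiv 2 (Fin n → ℂ)).symm (Pi.single v (1:ℂ))‖ = 1 := by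
    simpa using EuclideanSpace.norm_single v (1:ℂ)
  rw [hx, mul_one] at h
  refine le_trans ?_ h
  set y := (WithLp.equiv 2 (Fin n → ℂ)).symm (Matrix.toLin' M (Pi.single v 1)) with hy
  have hyu : y u = M u v := by
    show Matrix.toLin' M (Pi.single v 1) u = M u v
    simp [Matrix.toLin'_apply, Matrix.mulVec_single]
  rw [← hyu, EuclideanSpace.norm_eq]
  have h1 : ‖y u‖ ^ 2 ≤ ∑ w, ‖y w‖ ^ 2 :=
    Finset.single_le_sum (f := fun w => ‖y w‖ ^ 2) (fun w _ => sq_nonneg _) (Finset.mem_univ u)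
  calc ‖y u‖ = Real.sqrt (‖y u‖ ^ 2) := by rw [Real.sqrt_sq (norm_nonneg _)]
    _ ≤ _ := Real.sqrt_le_sqrt h1

lemma two_entry_norm_le' {n : ℕ} (M : Matrix (Fin n) (Fin n) ℂ) (i j : Fin n) (hij : i ≠ j)
    (h0 : ∀ u v, ¬((u = i ∧ v = j) ∨ (u = j ∧ v = i)) → M u v = 0)
    (h1 : ‖M i j‖ ≤ 1) (h2 : ‖M j i‖ ≤ 1) :
    ‖Matrix.toEuclideanCLM (𝕜 := ℂ) M‖ ≤ 1 := by
  refine ContinuousLinearMap.opNorm_le_bound _ zero_le_one fun x => ?_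
  rw [one_mul]
  set y := Matrix.toEuclideanCLM (𝕜 := ℂ) M x with hy
  have hyw : ∀ w, y w = ∑ v, M w v * x v := fun w => rfl
  have hyi : y i = M i j * x j := by
    rw [hyw]
    refine Finset.sum_eq_single j (fun v _ hv => ?_) (by simp)
    rw [h0 i v (by simp [hv, hij]), zero_mul]
  have hyj : y j = M j i * x i := by
    rw [hyw]
    refine Finset.sum_eq_single i (fun v _ hv => ?_) (by simp)
    rw [h0 j v (by simp [hv, hij.symm]), zero_mul]
  have hyo : ∀ w, w ≠ i → w ≠ j → y w = 0 := by
    intro w hwi hwj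
    rw [hyw]
    refine Finset.sum_eq_zero fun v _ => ?_
    rw [h0 w v (by simp [hwi, hwj]), zero_mul]
  rw [EuclideanSpace.norm_eq, EuclideanSpace.norm_eq]
  apply Real.sqrt_le_sqrt
  have e1 : ∑ w, ‖y w‖ ^ 2 = ∑ w ∈ ({i, j} : Finset (Fin n)), ‖y w‖ ^ 2 := by
    refine (Finset.sum_subset (Finset.subset_univ _) fun w _ hw => ?_).symm
    simp only [Finset.mem_insert, Finset.mem_singleton, not_or] at hw
    rw [hyo w hw.1 hw.2]
    simp
  rw [e1, Finset.sum_pair hij]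
  have b1 : ‖y i‖ ^ 2 ≤ ‖x j‖ ^ 2 := by
    rw [hyi]
    refine pow_le_pow_left₀ (norm_nonneg _) ?_ 2
    rw [norm_mul]
    exact mul_le_of_le_one_left (norm_nonneg _) h1
  have b2 : ‖y j‖ ^ 2 ≤ ‖x i‖ ^ 2 := by
    rw [hyj]
    refine pow_le_pow_left₀ (norm_nonneg _) ?_ 2
    rw [norm_mul]
    exact mul_le_of_le_one_left (norm_nonneg _) h2
  have e2 : ‖x j‖ ^ 2 + ‖x i‖ ^ 2 = ∑ w ∈ ({j, i} : Finset (Fin n)), ‖x w‖ ^ 2 := by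
    rw [Finset.sum_pair hij.symm]
  calc ‖y i‖ ^ 2 + ‖y j‖ ^ 2 ≤ ‖x j‖ ^ 2 + ‖x i‖ ^ 2 := add_le_add b1 b2
    _ = _ := e2
    _ ≤ _ := Finset.sum_le_sum_of_subset_of_nonneg (Finset.subset_univ _)
        (fun w _ _ => sq_nonneg _)

lemma isWalk_nil' {ι : Type*} (D : Matrix ι ι ℂ) (i : ι) : IsWalk D i i [] :=
  ⟨List.Chain.nil, rfl⟩

lemma getLast_cons_cons' {ι : Type*} (u v : ι) (p : List ι) :
    (u :: v :: p).getLast (List.cons_ne_nil _ _) = (v :: p).getLast (List.cons_ne_nil _ _) :=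
  List.getLast_cons _

lemma isWalk_cons' {ι : Type*} {D : Matrix ι ι ℂ} {u v y : ι} {p : List ι}
    (h : Adjac D u v) (hw : IsWalk D v y p) : IsWalk D u y (v :: p) :=
  ⟨List.Chain.cons h hw.1, by rw [getLast_cons_cons']; exact hw.2⟩

lemma isWalk_snoc' {ι : Type*} {D : Matrix ι ι ℂ} {y z : ι} :
    ∀ (p : List ι) (x : ι), IsWalk D x y p → Adjac D y z → IsWalk D x z (p ++ [z])
  | [], x, hw, ha => by
      have hxy : x = y := hw.2
      subst hxy
      exact ⟨List.Chain.cons ha List.Chain.nil, by simp [getLast_cons_cons']⟩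
  | v :: rest, x, hw, ha => by
      have h1 : Adjac D x v := (List.chain_cons.mp hw.1).1
      have h2 : IsWalk D v y rest := ⟨(List.chain_cons.mp hw.1).2, by
        have h3 := hw.2; rwa [getLast_cons_cons'] at h3⟩
      exact isWalk_cons' h1 (isWalk_snoc' rest v h2 ha)

theorem stmt6 {n : ℕ} (D : Matrix (Fin n) (Fin n) ℂ)
    (hherm : D.IsHermitian) (hdiag : ∀ i, D i i = 0) (i j : Fin n)
    (hadj : Adjac D i j)
    (hbridge : ¬ Conn
      (Matrix.of fun a b => if (a = i ∧ b = j) ∨ (a = j ∧ b = i) then 0 else D a b) i j) :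
    ncDist D i j = eWeight D i j ∧ ncDist D i j = gDist D i j := by
  classical
  obtain ⟨hij, hDij⟩ := hadj
  have hpos : 0 < ‖D i j‖ := norm_pos_iff.mpr hDij
  set c : ℝ := ‖D i j‖⁻¹ with hc
  have hcpos : 0 < c := inv_pos.mpr hpos
  set D' : Matrix (Fin n) (Fin n) ℂ :=
    Matrix.of fun a b => if (a = i ∧ b = j) ∨ (a = j ∧ b = i) then 0 else D a b with hD'
  have hsym : ∀ u v, D v u = star (D u v) := fun u v => by
    conv_lhs => rw [← hherm]
    exact Matrix.conjTranspose_apply D u v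
  have hnormsym : ∀ u v, ‖D v u‖ = ‖D u v‖ := fun u v => by rw [hsym, norm_star]
  have hD'app : ∀ u v, D' u v = if (u = i ∧ v = j) ∨ (u = j ∧ v = i) then 0 else D u v :=
    fun u v => rfl
  -- adjacency in D'
  have hadjD' : ∀ u v, u ≠ v → ¬((u = i ∧ v = j) ∨ (u = j ∧ v = i)) → D u v ≠ 0 →
      Adjac D' u v := by
    intro u v huv hcond hD
    refine ⟨huv, ?_⟩
    rw [hD'app, if_neg hcond]
    exact hD
  have hD'symm : ∀ u v, Adjac D' u v → Adjac D' v u := by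
    intro u v ⟨huv, hne⟩
    rw [hD'app] at hne
    by_cases hcond : (u = i ∧ v = j) ∨ (u = j ∧ v = i)
    · rw [if_pos hcond] at hne; exact absurd rfl hne
    · rw [if_neg hcond] at hne
      refine hadjD' v u huv.symm ?_ ?_
      · rintro (⟨h1, h2⟩ | ⟨h1, h2⟩)
        · exact hcond (Or.inr ⟨h2, h1⟩)
        · exact hcond (Or.inl ⟨h2, h1⟩)
      · rw [hsym]
        simpa using hne
  -- the connectivity predicate
  set K : Fin n → Prop := fun u => Conn D' i u with hK
  have hstep : ∀ u v, Adjac D' u v → (K u ↔ K v) := by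
    intro u v ha
    constructor
    · rintro ⟨p, hp⟩
      exact ⟨p ++ [v], isWalk_snoc' p i hp ha⟩
    · rintro ⟨p, hp⟩
      exact ⟨p ++ [u], isWalk_snoc' p i hp (hD'symm u v ha)⟩
  have hKi : K i := ⟨[], isWalk_nil' D' i⟩
  have hKj : ¬ K j := hbridge
  -- the test function
  set a : Fin n → ℂ := fun u => if K u then (c : ℂ) else 0 with ha
  have hai : a i = (c : ℂ) := if_pos hKi
  have haj : a j = 0 := if_neg hKj
  -- crossing lemma
  have hcross : ∀ u v, D u v ≠ 0 → a u ≠ a v → (u = i ∧ v = j) ∨ (u = j ∧ v = i) := by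
    intro u v hD hne
    by_contra hcond
    have huv : u ≠ v := fun h => hne (h ▸ rfl)
    have hKuv := hstep u v (hadjD' u v huv hcond hD)
    apply hne
    simp only [ha]
    by_cases hu : K u
    · rw [if_pos hu, if_pos (hKuv.mp hu)]
    · rw [if_neg hu, if_neg (fun hv => hu (hKuv.mpr hv))]
  -- the commutator of a
  have hM0 : ∀ u v, ¬((u = i ∧ v = j) ∨ (u = j ∧ v = i)) → commD D a u v = 0 := by
    intro u v hcond
    rw [commD_apply']
    by_cases hD : D u v = 0
    · rw [hD, zero_mul]
    · have : a u = a v := by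
        by_contra hne
        exact hcond (hcross u v hD hne)
      rw [this, sub_self, mul_zero]
  have hnc : ‖(c : ℂ)‖ = c := by
    rw [Complex.norm_real, Real.norm_of_nonneg hcpos.le]
  have hM1 : ‖commD D a i j‖ = 1 := by
    rw [commD_apply', hai, haj, zero_sub, norm_mul, norm_neg, hnc, hc,
      mul_inv_cancel₀ hpos.ne']
  have hM2 : ‖commD D a j i‖ = 1 := by
    rw [commD_apply', hai, haj, sub_zero, norm_mul, hnc, hnormsym, hc,
      mul_inv_cancel₀ hpos.ne']
  have hople : opNorm (commD D a) ≤ 1 := by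
    rw [opNorm_eq']
    exact two_entry_norm_le' _ i j hij hM0 hM1.le hM2.le
  -- eWeight as ofReal c
  have heW : eWeight D i j = ENNReal.ofReal c := by
    rw [eWeight, hc, ENNReal.ofReal_inv_of_pos hpos]
  -- lower bound for ncDist
  have hlower : ENNReal.ofReal c ≤ ncDist D i j := by
    have h := le_iSup₂ (f := fun (b : Fin n → ℂ) (_ : opNorm (commD D b) ≤ 1) =>
      ENNReal.ofReal ‖b i - b j‖) a hople
    have heq : ‖a i - a j‖ = c := by rw [hai, haj, sub_zero, hnc]
    rwa [heq] at h
  -- upper bound for ncDist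
  have hupper : ncDist D i j ≤ ENNReal.ofReal c := by
    refine iSup₂_le fun b hb => ?_
    have hent : ‖commD D b i j‖ ≤ 1 := by
      refine le_trans ?_ hb
      rw [opNorm_eq']
      exact entry_le' _ i j
    rw [commD_apply', norm_mul] at hent
    have hbij : ‖b i - b j‖ ≤ c := by
      rw [norm_sub_rev, hc, ← one_div]
      rw [le_div_iff₀ hpos]
      linarith [hent]
    exact ENNReal.ofReal_le_ofReal hbij
  have hfirst : ncDist D i j = eWeight D i j := by
    rw [heW]
    exact le_antisymm hupper hlower
  -- gDist ≤ eWeight via the one-step walk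
  have hwalkj : IsWalk D i j [j] := ⟨List.Chain.cons ⟨hij, hDij⟩ List.Chain.nil, by simp⟩
  have hgle : gDist D i j ≤ eWeight D i j := by
    refine le_trans (iInf₂_le [j] hwalkj) ?_
    simp [walkLength]
  -- every walk from i to j has length at least eWeight D i j
  have heWji : eWeight D j i = eWeight D i j := by rw [eWeight, eWeight, hnormsym]
  have hkey : ∀ (p : List (Fin n)) (u : Fin n), IsWalk D u j p →
      Conn D' u j ∨ eWeight D i j ≤ walkLength D u p := by
    intro p
    induction p with
    | nil =>
      intro u hw
      have huj : u = j := hw.2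
      subst huj
      exact Or.inl ⟨[], isWalk_nil' D' u⟩
    | cons v rest ih =>
      intro u hw
      have h1 : Adjac D u v := (List.chain_cons.mp hw.1).1
      have h2 : IsWalk D v j rest := ⟨(List.chain_cons.mp hw.1).2, by
        have h3 := hw.2; rwa [getLast_cons_cons'] at h3⟩
      have hwl : walkLength D u (v :: rest) = eWeight D u v + walkLength D v rest := rfl
      rcases ih v h2 with hconn | hlen
      · by_cases hcond : (u = i ∧ v = j) ∨ (u = j ∧ v = i)
        · rcases hcond with ⟨hu, hv⟩ | ⟨hu, hv⟩
          · subst hu; subst hv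
            exact Or.inr (by rw [hwl]; exact le_self_add)
          · subst hu; subst hv
            exact Or.inr (by rw [hwl, heWji.symm]; exact le_self_add)
        · obtain ⟨p', hp'⟩ := hconn
          exact Or.inl ⟨v :: p', isWalk_cons' (hadjD' u v h1.1 hcond h1.2) hp'⟩
      · exact Or.inr (by rw [hwl]; exact le_add_self.trans (add_le_add_right hlen _))
  have hgge : eWeight D i j ≤ gDist D i j := by
    refine le_iInf₂ fun p hp => ?_
    rcases hkey p i hp with hconn | hlen
    · exact absurd hconn hbridge
    · exact hlen
  exact ⟨hfirst, by rw [hfirst]; exact (le_antisymm hgle hgge).symm⟩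
end
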